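/- arXiv:1907.03844 — 6 statements merged into one kernel-verified Lean document; each statement's English description precedes it below -/
import Mathlib

section
/- Let Z be a finite set of cardinality 2n with n ≥ 1 and let {X, Y} be a splitting of Z. Then S(X,Y) is a normal subgroup of W(X,Y), and moreover the normalizer of S(X,Y) in Perm(Z) equals W(X,Y). -/
/-- A subgroup of `Equiv.Perm Z` is regular if it acts transitively and
no non-identity element has a fixed point. -/
def IsRegularSubgroup {Z : Type*} (N : Subgroup (Equiv.Perm Z)) : Prop :=
  (∀ z w : Z, ∃ σ ∈ N, σ z = w) ∧ ∀ σ ∈ N, σ ≠ 1 → ∀ z : Z, σ z ≠ z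

/-- The wreath-product subgroup `W(X, Y)` (with `Y = Xᶜ`): all permutations that
either fix both `X` and `Y` setwise, or interchange them. -/
def wprod {Z : Type*} (X : Set Z) : Subgroup (Equiv.Perm Z) where
  carrier := {w | (w '' X = X ∧ w '' Xᶜ = Xᶜ) ∨ (w '' X = Xᶜ ∧ w '' Xᶜ = X)}
  one_mem' := by simp
  mul_mem' := by
    rintro a b (⟨ha1, ha2⟩ | ⟨ha1, ha2⟩) (⟨hb1, hb2⟩ | ⟨hb1, hb2⟩) <;>
      simp only [Set.mem_setOf_eq, Equiv.Perm.coe_mul, Set.image_comp, hb1, hb2, ha1, ha2] <;>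
      tauto
  inv_mem' := by
    intro a h
    have key : ∀ S T : Set Z, a '' S = T → (a⁻¹ : Equiv.Perm Z) '' T = S := by
      intro S T hST
      rw [← hST, Set.image_image]
      simp
    rcases h with ⟨h1, h2⟩ | ⟨h1, h2⟩
    · exact Or.inl ⟨key _ _ h1, key _ _ h2⟩
    · exact Or.inr ⟨key _ _ h2, key _ _ h1⟩

/-- The image of the left regular representation `λ : G → Perm G`. -/
def leftRegRange (G : Type*) [Group G] : Subgroup (Equiv.Perm G) :=
  (MulAction.toPermHom G G).range

/-- `|Υ_n|`: number of units of exponent 2 mod `n`. -/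
noncomputable def upsilonCard (n : ℕ) : ℕ :=
  Nat.card {u : (ZMod n)ˣ // u ^ 2 = 1}

/-- The subgroup `S(X, Y) = B_X × B_Y` of permutations fixing `X` and `Y = Xᶜ` setwise. -/
def sprod {Z : Type*} (X : Set Z) : Subgroup (Equiv.Perm Z) where
  carrier := {w | w '' X = X ∧ w '' Xᶜ = Xᶜ}
  one_mem' := by simp
  mul_mem' := by
    rintro a b ⟨ha1, ha2⟩ ⟨hb1, hb2⟩
    constructor <;>
      simp only [Set.mem_setOf_eq, Equiv.Perm.coe_mul, Set.image_comp, hb1, hb2, ha1, ha2]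
  inv_mem' := by
    intro a h
    have key : ∀ S T : Set Z, a '' S = T → (a⁻¹ : Equiv.Perm Z) '' T = S := by
      intro S T hST
      rw [← hST, Set.image_image]
      simp
    exact ⟨key _ _ h.1, key _ _ h.2⟩


section Aux
variable {Z : Type*}

private lemma key_inv (a : Equiv.Perm Z) (S T : Set Z) (h : a '' S = T) :
    (a⁻¹ : Equiv.Perm Z) '' T = S := by
  rw [← h, Set.image_image]
  simp

private lemma img_compl (w : Equiv.Perm Z) (X : Set Z) : w '' Xᶜ = (w '' X)ᶜ :=
  Set.image_compl_eq w.bijective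

private lemma mem_sprod_iff (X : Set Z) (s : Equiv.Perm Z) :
    s ∈ sprod X ↔ s '' X = X := by
  constructor
  · exact fun h => h.1
  · intro h
    refine ⟨h, ?_⟩
    rw [img_compl, h]

private lemma mem_wprod_iff (X : Set Z) (w : Equiv.Perm Z) :
    w ∈ wprod X ↔ w '' X = X ∨ w '' X = Xᶜ := by
  constructor
  · rintro (⟨h, _⟩ | ⟨h, _⟩)
    · exact Or.inl h
    · exact Or.inr h
  · rintro (h | h)
    · exact Or.inl ⟨h, by rw [img_compl, h]⟩
    · exact Or.inr ⟨h, by rw [img_compl, h, compl_compl]⟩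

private lemma wprod_le_normalizer (X : Set Z) : wprod X ≤ Subgroup.normalizer ((sprod X : Subgroup (Equiv.Perm Z)) : Set (Equiv.Perm Z)) := by
  have fwd : ∀ w ∈ wprod X, ∀ s ∈ sprod X, w * s * w⁻¹ ∈ sprod X := by
    intro w hw s hs
    rw [mem_sprod_iff] at hs ⊢
    have heq : (w * s * w⁻¹) '' X = w '' (s '' ((w⁻¹ : Equiv.Perm Z) '' X)) := by
      rw [show ((w * s * w⁻¹ : Equiv.Perm Z) : Z → Z) = (w : Z → Z) ∘ s ∘ (w⁻¹ : Equiv.Perm Z) from rfl,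
        Set.image_comp, Set.image_comp]
    rw [heq]
    rcases (mem_wprod_iff X w).1 hw with h | h
    · rw [key_inv w X X h, hs, h]
    · have h2 : w '' Xᶜ = X := by rw [img_compl, h, compl_compl]
      have hs' : s '' Xᶜ = Xᶜ := by rw [img_compl, hs]
      rw [key_inv w Xᶜ X h2, hs']; exact h2
  intro w hw
  rw [Subgroup.mem_normalizer_iff]
  intro s
  constructor
  · exact fun hs => fwd w hw s hs
  · intro hs
    have := fwd w⁻¹ ((wprod X).inv_mem hw) _ hs
    simpa [mul_assoc] using this
end Aux

/-- For a splitting `{X, Y}`, `S(X,Y)` is normal in `W(X,Y)` and its normalizer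
in `Perm Z` is exactly `W(X,Y)`. -/
theorem sprod_normal_and_normalizer {Z : Type*} [Fintype Z] (n : ℕ) (hn : 1 ≤ n)
    (hZ : Fintype.card Z = 2 * n) (X : Set Z) (hX : X.ncard = n) (hXc : Xᶜ.ncard = n) :
    ((sprod X).subgroupOf (wprod X)).Normal ∧ Subgroup.normalizer ((sprod X : Subgroup (Equiv.Perm Z)) : Set (Equiv.Perm Z)) = wprod X := by
  classical
  have hnorm : Subgroup.normalizer ((sprod X : Subgroup (Equiv.Perm Z)) : Set (Equiv.Perm Z)) = wprod X := by
    apply le_antisymm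
    · intro w hw
      rw [Subgroup.mem_normalizer_iff] at hw
      rw [mem_wprod_iff]
      by_contra hcon
      push_neg at hcon
      obtain ⟨h1, h2⟩ := hcon
      have hcard : (w '' X).ncard = n := by
        rw [Set.ncard_image_of_injective _ w.injective, hX]
      -- not a subset of X
      have hns1 : ¬ w '' X ⊆ X := fun hsub =>
        h1 (Set.eq_of_subset_of_ncard_le hsub (by rw [hX, hcard]) X.toFinite)
      have hns2 : ¬ w '' X ⊆ Xᶜ := fun hsub =>
        h2 (Set.eq_of_subset_of_ncard_le hsub (by rw [hXc, hcard]) Xᶜ.toFinite)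
      obtain ⟨a, ha, hwa⟩ : ∃ a ∈ X, w a ∈ X := by
        rcases Set.not_subset.1 hns2 with ⟨y, hy1, hy2⟩
        rcases hy1 with ⟨a, ha, rfl⟩
        exact ⟨a, ha, not_not.1 hy2⟩
      obtain ⟨b, hb, hwb⟩ : ∃ b ∈ X, w b ∈ Xᶜ := by
        rcases Set.not_subset.1 hns1 with ⟨y, hy1, hy2⟩
        rcases hy1 with ⟨b, hb, rfl⟩
        exact ⟨b, hb, hy2⟩
      have hsw : Equiv.swap a b ∈ sprod X := by
        rw [mem_sprod_iff]
        ext z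
        constructor
        · rintro ⟨x, hx, rfl⟩
          rcases eq_or_ne x a with rfl | hxa
          · rwa [Equiv.swap_apply_left]
          rcases eq_or_ne x b with rfl | hxb
          · rwa [Equiv.swap_apply_right]
          · rwa [Equiv.swap_apply_of_ne_of_ne hxa hxb]
        · intro hz
          rcases eq_or_ne z a with rfl | hza
          · exact ⟨b, hb, Equiv.swap_apply_right _ _⟩
          rcases eq_or_ne z b with rfl | hzb
          · exact ⟨a, ha, Equiv.swap_apply_left _ _⟩
          · exact ⟨z, hz, Equiv.swap_apply_of_ne_of_ne hza hzb⟩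
      have hconj : w * Equiv.swap a b * w⁻¹ ∈ sprod X := (hw _).1 hsw
      rw [← Equiv.swap_apply_apply, mem_sprod_iff] at hconj
      have : Equiv.swap (w a) (w b) (w a) ∈ X := by
        rw [← hconj]; exact ⟨w a, hwa, rfl⟩
      rw [Equiv.swap_apply_left] at this
      exact hwb this
    · exact wprod_le_normalizer X
  constructor
  · constructor
    intro s hs g
    rw [Subgroup.mem_subgroupOf] at hs ⊢
    have hg : (g : Equiv.Perm Z) ∈ Subgroup.normalizer ((sprod X : Subgroup (Equiv.Perm Z)) : Set (Equiv.Perm Z)) := by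
      rw [hnorm]; exact g.2
    exact (Subgroup.mem_normalizer_iff.1 hg _).1 hs
  · exact hnorm
end

section
/- For every integer n ≥ 3, there is exactly one subset X of (the underlying set of) D_n with 1 ∈ X, |X| = n, and Hol(D_n) = Norm_B(λ(D_n)) ≤ W(X, X^c); namely X = X_0 = {x^b : b ∈ ℤ/nℤ}, the set of rotations. That is, Hol(D_n) is a subgroup of W(X,Y) for a unique splitting {X,Y}, namely {X_0, Y_0}. -/
/-- `X₀`: the set of rotations in `D_n`. -/
def dihedralX0 (n : ℕ) : Set (DihedralGroup n) :=
  Set.range (DihedralGroup.r : ZMod n → DihedralGroup n)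

/-- `X₁ = {x^b : b even} ∪ {t x^b : b even}`. -/
def dihedralX1 (n : ℕ) : Set (DihedralGroup n) :=
  Set.range (fun c : ZMod n => DihedralGroup.r (2 * c)) ∪
    Set.range (fun c : ZMod n => DihedralGroup.sr (2 * c))

/-- `X₂ = {x^b : b even} ∪ {t x^b : b odd}`. -/
def dihedralX2 (n : ℕ) : Set (DihedralGroup n) :=
  Set.range (fun c : ZMod n => DihedralGroup.r (2 * c)) ∪
    Set.range (fun c : ZMod n => DihedralGroup.sr (2 * c + 1))

theorem Equiv.Perm.inv_apply_self {α : Type*} (f : Equiv.Perm α) (x : α) : f⁻¹ (f x) = x :=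
  f.symm_apply_apply x

theorem Equiv.Perm.apply_inv_self {α : Type*} (f : Equiv.Perm α) (x : α) : f (f⁻¹ x) = x :=
  f.apply_symm_apply x

section Aux

open DihedralGroup

lemma mem_wprod {Z : Type*} (X : Set Z) (w : Equiv.Perm Z) :
    w ∈ wprod X ↔ (w '' X = X ∧ w '' Xᶜ = Xᶜ) ∨ (w '' X = Xᶜ ∧ w '' Xᶜ = X) :=
  Iff.rfl

lemma mem_leftRegRange {G : Type*} [Group G] (p : Equiv.Perm G) :
    p ∈ leftRegRange G ↔ ∃ g : G, ∀ z, p z = g * z := by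
  constructor
  · rintro ⟨g, rfl⟩
    exact ⟨g, fun z => rfl⟩
  · rintro ⟨g, hg⟩
    exact ⟨g, Equiv.ext fun z => (hg z).symm⟩

/-- an element of the normalizer of the left regular representation fixing 1 is
multiplicative. -/
lemma normalizer_fix_one_mul {G : Type*} [Group G] {w : Equiv.Perm G}
    (hw : w ∈ Subgroup.normalizer (leftRegRange G : Set (Equiv.Perm G))) (h1 : w 1 = 1) :
    ∀ a b : G, w (a * b) = w a * w b := by
  intro a b
  have hinv1 : w⁻¹ 1 = 1 := by
    have := Equiv.Perm.inv_apply_self w 1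
    rwa [h1] at this
  have hmem : w * (MulAction.toPermHom G G a) * w⁻¹ ∈ leftRegRange G :=
    (Subgroup.mem_normalizer_iff.mp hw (MulAction.toPermHom G G a)).mp ⟨a, rfl⟩
  obtain ⟨g, hg⟩ := (mem_leftRegRange _).mp hmem
  have key : ∀ z, w (a * w⁻¹ z) = g * z := fun z => hg z
  have hga : g = w a := by
    have := key 1
    rwa [hinv1, mul_one, mul_one, eq_comm] at this
  have := key (w b)
  rwa [Equiv.Perm.inv_apply_self, hga] at this

lemma mulEquiv_mem_normalizer {G : Type*} [Group G] (e : G ≃* G) :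
    (e.toEquiv : Equiv.Perm G) ∈ Subgroup.normalizer (leftRegRange G : Set (Equiv.Perm G)) := by
  rw [Subgroup.mem_normalizer_iff]
  intro p
  constructor
  · rintro ⟨h, rfl⟩
    refine (mem_leftRegRange _).mpr ⟨e h, fun z => ?_⟩
    show e (h * e.toEquiv⁻¹ z) = e h * z
    rw [map_mul]
    congr 1
    exact e.toEquiv.apply_symm_apply z
  · intro hp
    obtain ⟨g, hg⟩ := (mem_leftRegRange _).mp hp
    refine (mem_leftRegRange _).mpr ⟨e.symm g, fun z => ?_⟩
    have h2 := hg (e.toEquiv z)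
    simp only [Equiv.Perm.coe_mul, Function.comp_apply, Equiv.Perm.inv_apply_self] at h2
    have h3 := congrArg e.symm h2
    simpa [map_mul] using h3

/-- The automorphism of `D_n` given by `r a ↦ r a`, `sr a ↦ sr (a+1)`. -/
def psi (n : ℕ) : DihedralGroup n ≃* DihedralGroup n where
  toFun := fun z => match z with | .r a => .r a | .sr a => .sr (a + 1)
  invFun := fun z => match z with | .r a => .r a | .sr a => .sr (a - 1)
  left_inv := by rintro (a | a) <;> simp
  right_inv := by rintro (a | a) <;> simp
  map_mul' := by
    rintro (a | a) (b | b) <;>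
      simp only [r_mul_r, r_mul_sr, sr_mul_r, sr_mul_sr] <;> first | rfl | (congr 1; ring)

lemma psi_apply_sr (n : ℕ) (a : ZMod n) : psi n (.sr a) = .sr (a + 1) := rfl

lemma psi_apply_one (n : ℕ) : psi n 1 = 1 := map_one _

lemma X0_compl (n : ℕ) : (dihedralX0 n)ᶜ = Set.range (DihedralGroup.sr : ZMod n → _) := by
  ext z
  cases z with
  | r a => simp [dihedralX0]
  | sr a => simp [dihedralX0]

lemma r_injective (n : ℕ) : Function.Injective (DihedralGroup.r : ZMod n → _) := by
  intro a b h; simpa using h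

lemma sr_injective (n : ℕ) : Function.Injective (DihedralGroup.sr : ZMod n → _) := by
  intro a b h; simpa using h

lemma ncard_X0 (n : ℕ) [NeZero n] : (dihedralX0 n).ncard = n := by
  rw [dihedralX0, ← Nat.card_coe_set_eq, Nat.card_range_of_injective (r_injective n),
    Nat.card_zmod]

lemma r_pow (n : ℕ) (k : ZMod n) (m : ℕ) :
    (DihedralGroup.r k) ^ m = DihedralGroup.r ((m : ZMod n) * k) := by
  induction m with
  | zero => rw [pow_zero, Nat.cast_zero, zero_mul, one_def]
  | succ m ih => rw [pow_succ, ih, r_mul_r]; congr 1; push_cast; ring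

lemma image_range_eq {α β γ : Type*} (e : Equiv.Perm β) (f : α → β) (g : γ → β)
    (h1 : ∀ a, ∃ c, e (f a) = g c) (h2 : ∀ c, ∃ a, e (f a) = g c) :
    e '' Set.range f = Set.range g := by
  ext z
  constructor
  · rintro ⟨-, ⟨a, rfl⟩, rfl⟩
    obtain ⟨c, hc⟩ := h1 a
    exact ⟨c, hc.symm⟩
  · rintro ⟨c, rfl⟩
    obtain ⟨a, ha⟩ := h2 c
    exact ⟨f a, ⟨a, rfl⟩, ha⟩

end Aux

section Main

open DihedralGroup

lemma one_add_one_ne_zero_zmod {n : ℕ} (hn : 3 ≤ n) : (1 + 1 : ZMod n) ≠ 0 := by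
  haveI : NeZero n := ⟨by omega⟩
  have hcast : ((2 : ℕ) : ZMod n) = (1 + 1 : ZMod n) := by push_cast; ring
  intro hzero
  rw [← hcast, ZMod.natCast_eq_zero_iff] at hzero
  have := Nat.le_of_dvd (by norm_num) hzero
  omega

lemma pow_map {G : Type*} [Group G] {u : Equiv.Perm G}
    (hmul : ∀ a b : G, u (a * b) = u a * u b) (h1 : u 1 = 1) (x : G) :
    ∀ m : ℕ, u (x ^ m) = (u x) ^ m := by
  intro m
  induction m with
  | zero => simpa using h1
  | succ m ih => rw [pow_succ, hmul, ih, pow_succ]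

lemma norm_fix_image {n : ℕ} (hn : 3 ≤ n) {u : Equiv.Perm (DihedralGroup n)}
    (hu : u ∈ Subgroup.normalizer (leftRegRange (DihedralGroup n) : Set (Equiv.Perm (DihedralGroup n)))) (h1 : u 1 = 1) :
    u '' dihedralX0 n ⊆ dihedralX0 n := by
  haveI : NeZero n := ⟨by omega⟩
  have hmul := normalizer_fix_one_mul hu h1
  have hr1 : ∃ k, u (DihedralGroup.r 1) = DihedralGroup.r k := by
    cases h : u (DihedralGroup.r 1) with
    | r k => exact ⟨k, rfl⟩
    | sr b =>
      exfalso
      have hsq : u (DihedralGroup.r 1 * DihedralGroup.r 1) = 1 := by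
        rw [hmul, h, sr_mul_sr, sub_self, one_def]
      have heq : (DihedralGroup.r 1 * DihedralGroup.r 1 : DihedralGroup n) = 1 :=
        u.injective (by rw [hsq, h1])
      rw [r_mul_r, one_def] at heq
      exact one_add_one_ne_zero_zmod hn (r_injective n heq)
  obtain ⟨k, hk⟩ := hr1
  rintro z ⟨y, ⟨a, rfl⟩, rfl⟩
  have h3 : DihedralGroup.r a = (DihedralGroup.r 1 : DihedralGroup n) ^ a.val := by
    rw [r_one_pow, ZMod.natCast_rightInverse a]
  rw [h3, pow_map hmul h1, hk, _root_.r_pow]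
  exact ⟨_, rfl⟩

lemma norm_mem_wprod_of_fix {n : ℕ} (hn : 3 ≤ n) {u : Equiv.Perm (DihedralGroup n)}
    (hu : u ∈ Subgroup.normalizer (leftRegRange (DihedralGroup n) : Set (Equiv.Perm (DihedralGroup n)))) (h1 : u 1 = 1) :
    u ∈ wprod (dihedralX0 n) := by
  have hA : u '' dihedralX0 n ⊆ dihedralX0 n := norm_fix_image hn hu h1
  have hu' : u⁻¹ ∈ Subgroup.normalizer (leftRegRange (DihedralGroup n) : Set (Equiv.Perm (DihedralGroup n))) := inv_mem hu
  have h1' : u⁻¹ 1 = 1 := by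
    have := Equiv.Perm.inv_apply_self u 1
    rwa [h1] at this
  have hB : ⇑(u⁻¹) '' dihedralX0 n ⊆ dihedralX0 n := norm_fix_image hn hu' h1'
  have heq : u '' dihedralX0 n = dihedralX0 n := by
    refine subset_antisymm hA fun x hx => ?_
    exact ⟨u⁻¹ x, hB ⟨x, hx, rfl⟩, Equiv.Perm.apply_inv_self u x⟩
  exact Or.inl ⟨heq, by rw [Set.image_compl_eq u.bijective, heq]⟩

lemma lam_mem_wprod {n : ℕ} (g : DihedralGroup n) :
    MulAction.toPermHom (DihedralGroup n) (DihedralGroup n) g ∈ wprod (dihedralX0 n) := by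
  have happ : ∀ (h z : DihedralGroup n),
      MulAction.toPermHom (DihedralGroup n) (DihedralGroup n) h z = h * z := fun _ _ => rfl
  cases g with
  | r c =>
    left
    constructor
    · rw [dihedralX0]
      refine image_range_eq _ _ _ (fun a => ⟨c + a, by rw [happ, r_mul_r]⟩)
        (fun c' => ⟨c' - c, by rw [happ, r_mul_r]; congr 1; ring⟩)
    · rw [X0_compl]
      refine image_range_eq _ _ _ (fun a => ⟨a - c, by rw [happ, r_mul_sr]⟩)
        (fun c' => ⟨c' + c, by rw [happ, r_mul_sr]; congr 1; ring⟩)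
  | sr c =>
    right
    constructor
    · rw [X0_compl, dihedralX0]
      refine image_range_eq _ _ _ (fun a => ⟨c + a, by rw [happ, sr_mul_r]⟩)
        (fun c' => ⟨c' - c, by rw [happ, sr_mul_r]; congr 1; ring⟩)
    · rw [X0_compl, dihedralX0]
      refine image_range_eq _ _ _ (fun a => ⟨a - c, by rw [happ, sr_mul_sr]⟩)
        (fun c' => ⟨c' + c, by rw [happ, sr_mul_sr]; congr 1; ring⟩)

/-- `Hol(D_n) = Norm_B(λ(D_n))` lies in `W(X, Xᶜ)` for a unique splitting with
`1 ∈ X` and `|X| = n`, namely `X = X₀`, the set of rotations. -/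
theorem hol_unique_splitting (n : ℕ) (hn : 3 ≤ n) :
    {X : Set (DihedralGroup n) | (1 : DihedralGroup n) ∈ X ∧ X.ncard = n ∧
        Subgroup.normalizer (leftRegRange (DihedralGroup n) : Set (Equiv.Perm (DihedralGroup n))) ≤ wprod X} = {dihedralX0 n} := by
  haveI : NeZero n := ⟨by omega⟩
  ext X
  simp only [Set.mem_setOf_eq, Set.mem_singleton_iff]
  constructor
  · rintro ⟨h1, hcard, hle⟩
    by_cases hsr : ∃ b, DihedralGroup.sr b ∈ X
    · exfalso
      obtain ⟨b, hb⟩ := hsr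
      have hpsi := hle (mulEquiv_mem_normalizer (psi n))
      rw [mem_wprod] at hpsi
      have hpsiX : (psi n).toEquiv '' X = X := by
        rcases hpsi with ⟨h, -⟩ | ⟨h, -⟩
        · exact h
        · exfalso
          have hmem : (1 : DihedralGroup n) ∈ Xᶜ := by
            rw [← h]
            exact ⟨1, h1, psi_apply_one n⟩
          exact hmem h1
      have hstep : ∀ z ∈ X, psi n z ∈ X := by
        intro z hz
        rw [← hpsiX]
        exact ⟨z, hz, rfl⟩
      have hall : ∀ m : ℕ, DihedralGroup.sr (b + (m : ZMod n)) ∈ X := by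
        intro m
        induction m with
        | zero => simpa using hb
        | succ m ih =>
          have h2 := hstep _ ih
          rw [psi_apply_sr] at h2
          convert h2 using 2
          push_cast
          ring
      have h1n : (1 : DihedralGroup n) ∉ Set.range (DihedralGroup.sr : ZMod n → _) := by
        rw [one_def]
        rintro ⟨c, hc⟩
        cases hc
      have hsub : insert (1 : DihedralGroup n) (Set.range DihedralGroup.sr) ⊆ X := by
        rintro z (rfl | ⟨c, rfl⟩)
        · exact h1
        · have h2 := hall (c - b).val
          have h3 : b + (((c - b).val : ℕ) : ZMod n) = c := by
            rw [ZMod.natCast_rightInverse (c - b)]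
            ring
          rwa [h3] at h2
      have hle' := Set.ncard_le_ncard hsub (Set.toFinite X)
      rw [Set.ncard_insert_of_notMem h1n (Set.toFinite _), ← Nat.card_coe_set_eq,
        Nat.card_range_of_injective (sr_injective n), Nat.card_zmod, hcard] at hle'
      omega
    · push_neg at hsr
      have hsub : X ⊆ dihedralX0 n := by
        intro z hz
        cases z with
        | r a => exact ⟨a, rfl⟩
        | sr a => exact absurd hz (hsr a)
      exact Set.eq_of_subset_of_ncard_le hsub (by rw [ncard_X0, hcard]) (Set.toFinite _)
  · rintro rfl
    refine ⟨⟨0, one_def.symm⟩, ncard_X0 n, ?_⟩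
    intro w hw
    have hg : MulAction.toPermHom (DihedralGroup n) (DihedralGroup n) (w 1) ∈
        Subgroup.normalizer (leftRegRange (DihedralGroup n) : Set (Equiv.Perm (DihedralGroup n))) :=
      Subgroup.le_normalizer ⟨w 1, rfl⟩
    have hw' : (MulAction.toPermHom (DihedralGroup n) (DihedralGroup n) (w 1))⁻¹ * w ∈
        Subgroup.normalizer (leftRegRange (DihedralGroup n) : Set (Equiv.Perm (DihedralGroup n))) :=
      mul_mem (inv_mem hg) hw
    have h1' : ((MulAction.toPermHom (DihedralGroup n) (DihedralGroup n) (w 1))⁻¹ * w) 1 = 1 := by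
      show (MulAction.toPermHom (DihedralGroup n) (DihedralGroup n) (w 1))⁻¹ (w 1) = 1
      rw [← map_inv]
      show (w 1)⁻¹ * (w 1) = 1
      exact inv_mul_cancel _
    have hmem := mul_mem (lam_mem_wprod (w 1)) (norm_mem_wprod_of_fix hn hw' h1')
    rwa [mul_inv_cancel_left] at hmem

end Main
end

section
/- Let n ≥ 3 and let N be a regular subgroup of B = Perm(D_n) isomorphic to D_n and normalized by λ(D_n). Let K ≤ N be a characteristic subgroup of N of index 2, and let X = K·1 be the K-orbit of the identity element. Then: (a) if n is odd, X = X_0; (b) if n is even, X equals X_0, X_1, or X_2. -/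
/-- `N ∈ R(D_n, [D_n])`: a regular subgroup of `Perm(D_n)` isomorphic to `D_n`
and normalized by the left regular representation `λ(D_n)`. -/
def IsDihedralHGS (n : ℕ) (N : Subgroup (Equiv.Perm (DihedralGroup n))) : Prop :=
  IsRegularSubgroup N ∧ Nonempty (N ≃* DihedralGroup n) ∧
    leftRegRange (DihedralGroup n) ≤ Subgroup.normalizer (N : Set (Equiv.Perm (DihedralGroup n)))

open DihedralGroup

lemma zmod_two_cases {n : ℕ} [NeZero n] (b : ZMod n) :
    (∃ c, b = 2 * c) ∨ (∃ c, b = 2 * c + 1) := by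
  rcases Nat.even_or_odd b.val with ⟨m, hm⟩ | ⟨m, hm⟩
  · left
    refine ⟨(m : ZMod n), ?_⟩
    have h : ((b.val : ℕ) : ZMod n) = ((m + m : ℕ) : ZMod n) := by rw [hm]
    rw [ZMod.natCast_val, ZMod.cast_id] at h
    rw [h]; push_cast; ring
  · right
    refine ⟨(m : ZMod n), ?_⟩
    have h : ((b.val : ℕ) : ZMod n) = ((2 * m + 1 : ℕ) : ZMod n) := by rw [hm]
    rw [ZMod.natCast_val, ZMod.cast_id] at h
    rw [h]; push_cast; ring

lemma classify_index_two {n : ℕ} (hn : 3 ≤ n) (H : Subgroup (DihedralGroup n))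
    (hidx : H.index = 2) :
    (Odd n → (H : Set (DihedralGroup n)) = dihedralX0 n) ∧
    (Even n → (H : Set (DihedralGroup n)) = dihedralX0 n ∨
      (H : Set (DihedralGroup n)) = dihedralX1 n ∨
      (H : Set (DihedralGroup n)) = dihedralX2 n) := by
  haveI : NeZero n := ⟨by omega⟩
  have hr2 : ∀ c : ZMod n, r (2 * c) ∈ H := by
    intro c
    have := Subgroup.mul_self_mem_of_index_two hidx (r c)
    rwa [r_mul_r, ← two_mul] at this
  by_cases hr1 : (r 1 : DihedralGroup n) ∈ H
  · have hrall : ∀ b : ZMod n, r b ∈ H := by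
      intro b
      have : (r 1 : DihedralGroup n) ^ (b.val) ∈ H := pow_mem hr1 _
      rwa [r_one_pow, ZMod.natCast_val, ZMod.cast_id] at this
    by_cases hsr0 : (sr 0 : DihedralGroup n) ∈ H
    · exfalso
      have htop : H = ⊤ := by
        rw [eq_top_iff]
        rintro (b | b) -
        · exact hrall b
        · have := H.mul_mem hsr0 (hrall b)
          rwa [sr_mul_r, zero_add] at this
      rw [htop, Subgroup.index_top] at hidx
      omega
    · have hX0 : (H : Set (DihedralGroup n)) = dihedralX0 n := by
        ext g
        constructor
        · intro hg
          cases g with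
          | r b => exact ⟨b, rfl⟩
          | sr b =>
            exfalso
            have := H.mul_mem hg (hrall (-b))
            rw [sr_mul_r, add_neg_cancel] at this
            exact hsr0 this
        · rintro ⟨b, rfl⟩; exact hrall b
      exact ⟨fun _ => hX0, fun _ => Or.inl hX0⟩
  · have hneven : Even n := by
      by_contra hodd
      obtain ⟨k, hk⟩ := Nat.not_even_iff_odd.mp hodd
      apply hr1
      have h1 : (2 : ZMod n) * ((k : ZMod n) + 1) = 1 := by
        have : ((2 * (k + 1) : ℕ) : ZMod n) = ((n + 1 : ℕ) : ZMod n) := by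
          congr 1; omega
        push_cast at this
        rwa [ZMod.natCast_self, zero_add] at this
      have := hr2 ((k : ZMod n) + 1)
      rwa [h1] at this
    have hrmem : ∀ b : ZMod n, r b ∈ H ↔ ∃ c, b = 2 * c := by
      intro b
      constructor
      · intro hb
        rcases zmod_two_cases b with h | ⟨c, hc⟩
        · exact h
        · exfalso
          apply hr1
          have h2 := H.mul_mem hb (H.inv_mem (hr2 c))
          have : (r b : DihedralGroup n) * (r (2 * c))⁻¹ = r 1 := by
            rw [eq_comm, eq_mul_inv_iff_mul_eq, r_mul_r, hc, add_comm]
          rwa [this] at h2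
      · rintro ⟨c, rfl⟩; exact hr2 c
    refine ⟨fun hodd => absurd hneven (Nat.not_even_iff_odd.mpr hodd), fun _ => ?_⟩
    by_cases hsr0 : (sr 0 : DihedralGroup n) ∈ H
    · right; left
      ext g
      cases g with
      | r b =>
        simp only [dihedralX1, Set.mem_union, Set.mem_range, SetLike.mem_coe]
        constructor
        · intro hb
          obtain ⟨c, hc⟩ := (hrmem b).mp hb
          exact Or.inl ⟨c, by rw [hc]⟩
        · rintro (⟨c, hc⟩ | ⟨c, hc⟩)
          · rw [r.injEq] at hc
            exact (hrmem b).mpr ⟨c, hc.symm⟩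
          · exact absurd hc (by simp)
      | sr b =>
        simp only [dihedralX1, Set.mem_union, Set.mem_range, SetLike.mem_coe]
        constructor
        · intro hb
          have h2 := H.mul_mem hsr0 hb
          rw [sr_mul_sr, sub_zero] at h2
          obtain ⟨c, hc⟩ := (hrmem b).mp h2
          exact Or.inr ⟨c, by rw [hc]⟩
        · rintro (⟨c, hc⟩ | ⟨c, hc⟩)
          · exact absurd hc (by simp)
          · rw [sr.injEq] at hc
            have := H.mul_mem hsr0 (hr2 c)
            rwa [sr_mul_r, zero_add, hc] at this
    · right; right
      obtain ⟨a, ha⟩ := Subgroup.index_eq_two_iff.mp hidx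
      have h1 : (r 1 : DihedralGroup n) * a ∈ H := by
        rcases ha (r 1) with ⟨h, -⟩ | ⟨h, -⟩
        · exact h
        · exact absurd h hr1
      have h2 : (sr 0 : DihedralGroup n) * a ∈ H := by
        rcases ha (sr 0) with ⟨h, -⟩ | ⟨h, -⟩
        · exact h
        · exact absurd h hsr0
      have hsrm1 : (sr (-1) : DihedralGroup n) ∈ H := by
        have h3 := H.mul_mem h2 (H.inv_mem h1)
        have heq : (sr 0 : DihedralGroup n) * a * (r 1 * a)⁻¹ = sr (-1) := by
          rw [mul_inv_rev, mul_assoc, mul_inv_cancel_left,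
            show ((r 1 : DihedralGroup n))⁻¹ = r (-1) from
              inv_eq_of_mul_eq_one_right (by rw [r_mul_r, add_neg_cancel]; exact one_def.symm),
            sr_mul_r, zero_add]
        rwa [heq] at h3
      ext g
      cases g with
      | r b =>
        simp only [dihedralX2, Set.mem_union, Set.mem_range, SetLike.mem_coe]
        constructor
        · intro hb
          obtain ⟨c, hc⟩ := (hrmem b).mp hb
          exact Or.inl ⟨c, by rw [hc]⟩
        · rintro (⟨c, hc⟩ | ⟨c, hc⟩)
          · rw [r.injEq] at hc
            exact (hrmem b).mpr ⟨c, hc.symm⟩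
          · exact absurd hc (by simp)
      | sr b =>
        simp only [dihedralX2, Set.mem_union, Set.mem_range, SetLike.mem_coe]
        constructor
        · intro hb
          have h3 := H.mul_mem hsrm1 hb
          rw [sr_mul_sr, sub_neg_eq_add] at h3
          obtain ⟨c, hc⟩ := (hrmem (b + 1)).mp h3
          refine Or.inr ⟨c - 1, ?_⟩
          congr 1
          have : b = 2 * c - 1 := by rw [← hc]; ring
          rw [this]; ring
        · rintro (⟨c, hc⟩ | ⟨c, hc⟩)
          · exact absurd hc (by simp)
          · rw [sr.injEq] at hc
            have := H.mul_mem hsrm1 (hr2 (c + 1))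
            rw [sr_mul_r] at this
            have heq : (-1 : ZMod n) + 2 * (c + 1) = 2 * c + 1 := by ring
            rwa [heq, hc] at this

/-- For `N ∈ R(D_n, [D_n])` with characteristic index-2 subgroup `K` and `X = K · 1`:
if `n` is odd then `X = X₀`; if `n` is even then `X ∈ {X₀, X₁, X₂}`. -/
theorem block_of_regular_dihedral (n : ℕ) (hn : 3 ≤ n)
    (N K : Subgroup (Equiv.Perm (DihedralGroup n))) (hN : IsDihedralHGS n N)
    (hKN : K ≤ N) (hKidx : K.relIndex N = 2) (hKchar : (K.subgroupOf N).Characteristic)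
    (X : Set (DihedralGroup n))
    (hX : X = (fun σ : Equiv.Perm (DihedralGroup n) => σ 1) '' (K : Set (Equiv.Perm (DihedralGroup n)))) :
    (Odd n → X = dihedralX0 n) ∧
    (Even n → X = dihedralX0 n ∨ X = dihedralX1 n ∨ X = dihedralX2 n) := by
  subst hX
  obtain ⟨⟨htrans, hfree⟩, ⟨e⟩, hnorm⟩ := hN
  haveI : NeZero n := ⟨by omega⟩
  set lam := MulAction.toPermHom (DihedralGroup n) (DihedralGroup n) with hlamdef
  have hlam_mem : ∀ g : DihedralGroup n, lam g ∈ Subgroup.normalizer (N : Set (Equiv.Perm (DihedralGroup n))) := fun g => hnorm ⟨g, rfl⟩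
  have hlam_apply : ∀ (g z : DihedralGroup n), lam g z = g * z := fun g z => rfl
  have hlam_inv : ∀ (g z : DihedralGroup n), (lam g)⁻¹ z = g⁻¹ * z := by
    intro g z
    rw [← map_inv]
    rfl
  have hconjK : ∀ (g : DihedralGroup n) (σ : Equiv.Perm (DihedralGroup n)), σ ∈ K →
      lam g * σ * (lam g)⁻¹ ∈ K := by
    intro g σ hσ
    have hmemN : ∀ τ : Equiv.Perm (DihedralGroup n), τ ∈ N ↔ lam g * τ * (lam g)⁻¹ ∈ N :=
      Subgroup.mem_normalizer_iff.mp (hlam_mem g)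
    have hmemN' : ∀ τ : Equiv.Perm (DihedralGroup n), τ ∈ N ↔ (lam g)⁻¹ * τ * lam g ∈ N := by
      intro τ
      have h := Subgroup.mem_normalizer_iff.mp ((Subgroup.normalizer (N : Set (Equiv.Perm (DihedralGroup n)))).inv_mem (hlam_mem g)) τ
      rwa [inv_inv] at h
    let φ : ↥N ≃* ↥N :=
      { toFun := fun τ => ⟨lam g * ↑τ * (lam g)⁻¹, (hmemN ↑τ).mp τ.2⟩
        invFun := fun τ => ⟨(lam g)⁻¹ * ↑τ * lam g, (hmemN' ↑τ).mp τ.2⟩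
        left_inv := by
          intro τ
          ext1
          simp [mul_assoc]
        right_inv := by
          intro τ
          ext1
          simp [mul_assoc]
        map_mul' := by
          intro τ ρ
          ext1
          simp [mul_assoc] }
    have hmap := Subgroup.characteristic_iff_map_eq.mp hKchar φ
    have hmem : φ ⟨σ, hKN hσ⟩ ∈ (K.subgroupOf N).map φ.toMonoidHom :=
      ⟨⟨σ, hKN hσ⟩, by simpa [Subgroup.mem_subgroupOf] using hσ, rfl⟩
    rw [hmap] at hmem
    simpa [Subgroup.mem_subgroupOf, φ] using hmem
  let Hsub : Subgroup (DihedralGroup n) :=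
    { carrier := (fun σ : Equiv.Perm (DihedralGroup n) => σ 1) '' (K : Set (Equiv.Perm (DihedralGroup n)))
      one_mem' := ⟨1, K.one_mem, rfl⟩
      mul_mem' := by
        rintro a b ⟨σ, hσ, rfl⟩ ⟨τ, hτ, rfl⟩
        refine ⟨lam (σ 1) * τ * (lam (σ 1))⁻¹ * σ, K.mul_mem (hconjK _ _ hτ) hσ, ?_⟩
        show (lam (σ 1)) (τ ((lam (σ 1))⁻¹ (σ 1))) = σ 1 * τ 1
        rw [hlam_inv, inv_mul_cancel, hlam_apply]
      inv_mem' := by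
        rintro a ⟨σ, hσ, rfl⟩
        refine ⟨lam (σ 1)⁻¹ * σ⁻¹ * (lam (σ 1)⁻¹)⁻¹, hconjK _ _ (K.inv_mem hσ), ?_⟩
        show (lam (σ 1)⁻¹) (σ⁻¹ ((lam (σ 1)⁻¹)⁻¹ 1)) = (σ 1)⁻¹
        rw [hlam_inv, inv_inv, mul_one, show σ⁻¹ (σ 1) = 1 from σ.symm_apply_apply 1, hlam_apply, mul_one] }
  have hinj : Set.InjOn (fun σ : Equiv.Perm (DihedralGroup n) => σ 1)
      (K : Set (Equiv.Perm (DihedralGroup n))) := by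
    intro σ hσ τ hτ h
    by_contra hne
    refine hfree (σ⁻¹ * τ) (N.mul_mem (N.inv_mem (hKN hσ)) (hKN hτ)) ?_ 1 ?_
    · intro h1
      exact hne (inv_mul_eq_one.mp h1)
    · show σ⁻¹ (τ 1) = 1
      have h' : σ 1 = τ 1 := h
      rw [← h']
      exact σ.symm_apply_apply 1
  have hcardH : Nat.card ↥Hsub = Nat.card ↥K := by
    have h1 : Nat.card ↥Hsub =
        Nat.card ((fun σ : Equiv.Perm (DihedralGroup n) => σ 1) ''
          (K : Set (Equiv.Perm (DihedralGroup n)))) := rfl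
    rw [h1, Nat.card_congr (Equiv.Set.imageOfInjOn _ _ hinj).symm]
    rfl
  have hcardN : Nat.card ↥N = 2 * n := by
    rw [Nat.card_congr e.toEquiv, Nat.card_eq_fintype_card, DihedralGroup.card]
  have hcardK : Nat.card ↥K = n := by
    have h1 := Subgroup.card_mul_index (H := K.subgroupOf N)
    have h2 : (K.subgroupOf N).index = 2 := hKidx
    have h3 : Nat.card ↥(K.subgroupOf N) = Nat.card ↥K :=
      Nat.card_congr (Subgroup.subgroupOfEquivOfLe hKN).toEquiv
    rw [h2, h3, hcardN] at h1
    omega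
  have hidx : Hsub.index = 2 := by
    have h1 := Subgroup.card_mul_index (H := Hsub)
    rw [hcardH, hcardK, Nat.card_eq_fintype_card, DihedralGroup.card] at h1
    exact Nat.eq_of_mul_eq_mul_left (by omega) (h1.trans (Nat.mul_comm 2 n))
  exact classify_index_two hn Hsub hidx
end

section
/- Let n ≥ 3, let Z be a finite set of cardinality 2n, and let σ ∈ Perm(Z) be a product of two disjoint n-cycles (i.e., σ has cycle type {n, n}). Then there is exactly one regular subgroup N ≤ Perm(Z) such that N is isomorphic to the dihedral group D_n and σ ∈ N; in this N, K = ⟨σ⟩ is an index-2 subgroup. -/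
open Equiv Equiv.Perm Subgroup DihedralGroup Finset

namespace UDON

variable {n : ℕ} {Z : Type*}

/-- The labeling map `D_n → Z`. -/
def phi (σ : Equiv.Perm Z) (x0 y0 : Z) : DihedralGroup n → Z
  | .r i => (σ ^ (i.val : ℤ)) x0
  | .sr i => (σ ^ (-(i.val : ℤ))) y0

lemma r_inv (i : ZMod n) : (DihedralGroup.r i)⁻¹ = .r (-i) :=
  inv_eq_of_mul_eq_one_right (by rw [r_mul_r, add_neg_cancel, ← DihedralGroup.one_def])

lemma r_pow (i : ZMod n) (m : ℕ) : (DihedralGroup.r i) ^ m = .r ((m : ZMod n) * i) := by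
  induction m with
  | zero => rw [pow_zero, Nat.cast_zero, zero_mul, ← DihedralGroup.one_def]
  | succ m ih =>
      rw [pow_succ, ih, r_mul_r]
      congr 1
      push_cast
      ring

section

variable [NeZero n] (σ : Equiv.Perm Z) (x0 y0 : Z)

lemma zpow_congr (hord : orderOf σ = n) {a b : ℤ} (h : (a : ZMod n) = b) : σ ^ a = σ ^ b := by
  rw [zpow_eq_zpow_iff_modEq, hord]
  exact (ZMod.intCast_eq_intCast_iff _ _ _).1 h

lemma shift {a b : ℤ} {u v : Z} (h : (σ ^ a) u = (σ ^ b) v) : (σ ^ (a - b)) u = v := by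
  have : (σ ^ (-b)) ((σ ^ a) u) = (σ ^ (-b)) ((σ ^ b) v) := by rw [h]
  rwa [← Equiv.Perm.mul_apply, ← Equiv.Perm.mul_apply, ← zpow_add, ← zpow_add,
    neg_add_cancel, zpow_zero, Equiv.Perm.one_apply, add_comm, ← sub_eq_add_neg] at this

variable (hfix : ∀ (z : Z) (k : ℤ), (σ ^ k) z = z ↔ (n : ℤ) ∣ k)
    (hy0 : ∀ k : ℤ, (σ ^ k) x0 ≠ y0)

include hfix hy0 in
lemma phi_injective : Function.Injective (phi (n := n) σ x0 y0) := by
  have key : ∀ (z : Z) (a b : ℤ), (σ ^ a) z = (σ ^ b) z → (a : ZMod n) = b := by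
    intro z a b h
    have h2 : ((n : ℤ)) ∣ (a - b) := (hfix z _).1 (shift σ h)
    have h3 : ((a - b : ℤ) : ZMod n) = 0 := (ZMod.intCast_zmod_eq_zero_iff_dvd _ _).2 h2
    push_cast at h3
    rwa [sub_eq_zero] at h3
  have vcast : ∀ i j : ZMod n, ((i.val : ℤ) : ZMod n) = ((j.val : ℤ) : ZMod n) → i = j := by
    intro i j h
    push_cast at h
    rwa [ZMod.natCast_zmod_val, ZMod.natCast_zmod_val] at h
  rintro (i | i) (j | j) h <;> simp only [phi] at h
  · exact congrArg DihedralGroup.r (vcast i j (key x0 _ _ h))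
  · exact absurd (shift σ h) (by simpa [sub_neg_eq_add] using hy0 ((i.val : ℤ) + j.val))
  · exact absurd (shift σ h.symm) (by simpa [sub_neg_eq_add] using hy0 ((j.val : ℤ) + i.val))
  · refine congrArg DihedralGroup.sr (vcast i j ?_)
    have := key y0 _ _ h
    rw [Int.cast_neg, Int.cast_neg, neg_inj] at this
    exact this

include hfix hy0 in
lemma phi_bijective [Fintype Z] [DecidableEq Z] (hZ : Fintype.card Z = 2 * n) :
    Function.Bijective (phi (n := n) σ x0 y0) :=
  (Fintype.bijective_iff_injective_and_card _).2
    ⟨phi_injective σ x0 y0 hfix hy0, by rw [DihedralGroup.card, hZ]⟩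

variable [Fintype Z] [DecidableEq Z] (hZ : Fintype.card Z = 2 * n)

/-- The labeling equivalence. -/
noncomputable def phiE : DihedralGroup n ≃ Z :=
  Equiv.ofBijective _ (phi_bijective σ x0 y0 hfix hy0 hZ)

/-- The regular embedding of `D_n` into `Perm Z`. -/
noncomputable def psi : DihedralGroup n →* Equiv.Perm Z :=
  MonoidHom.mk' (fun g => (phiE σ x0 y0 hfix hy0 hZ).permCongr (Equiv.mulLeft g))
    (by
      intro a b
      ext z
      simp [Equiv.permCongr_apply, mul_assoc])

lemma psi_apply_phiE (g h : DihedralGroup n) :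
    psi σ x0 y0 hfix hy0 hZ g (phiE σ x0 y0 hfix hy0 hZ h) = phiE σ x0 y0 hfix hy0 hZ (g * h) := by
  simp [psi, Equiv.permCongr_apply]

lemma phiE_r (i : ZMod n) : phiE σ x0 y0 hfix hy0 hZ (.r i) = (σ ^ (i.val : ℤ)) x0 := rfl

lemma phiE_sr (i : ZMod n) : phiE σ x0 y0 hfix hy0 hZ (.sr i) = (σ ^ (-(i.val : ℤ))) y0 := rfl

lemma psi_injective : Function.Injective (psi σ x0 y0 hfix hy0 hZ) := by
  intro a b h
  have := congrArg (fun p : Equiv.Perm Z => p (phiE σ x0 y0 hfix hy0 hZ 1)) h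
  simp only [psi_apply_phiE, mul_one] at this
  exact (phiE σ x0 y0 hfix hy0 hZ).injective this

lemma psi_r_one (hord : orderOf σ = n) : psi σ x0 y0 hfix hy0 hZ (.r 1) = σ := by
  ext z
  obtain ⟨g, rfl⟩ := (phiE σ x0 y0 hfix hy0 hZ).surjective z
  rw [psi_apply_phiE]
  cases g with
  | r j =>
      rw [r_mul_r, phiE_r, phiE_r]
      have h1 : σ ^ (((1 + j : ZMod n).val : ℤ)) = σ ^ (1 + (j.val : ℤ)) := by
        apply zpow_congr σ hord
        push_cast
        rw [ZMod.natCast_zmod_val, ZMod.natCast_zmod_val]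
      rw [h1, zpow_add, zpow_one, Equiv.Perm.mul_apply]
  | sr j =>
      rw [r_mul_sr, phiE_sr, phiE_sr]
      have h1 : σ ^ (-(((j - 1 : ZMod n).val : ℤ))) = σ ^ (1 + -(j.val : ℤ)) := by
        apply zpow_congr σ hord
        push_cast
        rw [ZMod.natCast_zmod_val, ZMod.natCast_zmod_val]
        ring
      rw [h1, zpow_add, zpow_one, Equiv.Perm.mul_apply]

lemma sigma_mem_range (hord : orderOf σ = n) : σ ∈ (psi σ x0 y0 hfix hy0 hZ).range :=
  ⟨.r 1, psi_r_one σ x0 y0 hfix hy0 hZ hord⟩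

lemma psi_range_trans : ∀ z w : Z, ∃ g ∈ (psi σ x0 y0 hfix hy0 hZ).range, g z = w := by
  intro z w
  obtain ⟨a, rfl⟩ := (phiE σ x0 y0 hfix hy0 hZ).surjective z
  obtain ⟨b, rfl⟩ := (phiE σ x0 y0 hfix hy0 hZ).surjective w
  exact ⟨psi σ x0 y0 hfix hy0 hZ (b * a⁻¹), ⟨_, rfl⟩, by
    rw [psi_apply_phiE, inv_mul_cancel_right]⟩

lemma psi_range_free :
    ∀ g ∈ (psi σ x0 y0 hfix hy0 hZ).range, g ≠ 1 → ∀ z : Z, g z ≠ z := by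
  rintro g ⟨d, rfl⟩ hne z hz
  obtain ⟨a, rfl⟩ := (phiE σ x0 y0 hfix hy0 hZ).surjective z
  rw [psi_apply_phiE] at hz
  have hda : d * a = a := (phiE σ x0 y0 hfix hy0 hZ).injective hz
  exact hne (by rw [mul_eq_right.1 hda, map_one])

lemma tau0_x0 : psi σ x0 y0 hfix hy0 hZ (.sr 0) x0 = y0 := by
  have h0 : phiE σ x0 y0 hfix hy0 hZ (.r 0) = x0 := by
    rw [phiE_r]
    simp [ZMod.val_zero]
  have h1 : psi σ x0 y0 hfix hy0 hZ (.sr 0) (phiE σ x0 y0 hfix hy0 hZ (.r 0))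
      = phiE σ x0 y0 hfix hy0 hZ (.sr 0) := by
    rw [psi_apply_phiE, sr_mul_r, add_zero]
  rw [h0] at h1
  rw [h1, phiE_sr]
  simp [ZMod.val_zero]

lemma tau0_sq : psi σ x0 y0 hfix hy0 hZ (.sr 0) * psi σ x0 y0 hfix hy0 hZ (.sr 0) = 1 := by
  rw [← map_mul, sr_mul_sr, sub_self, ← DihedralGroup.one_def, map_one]

lemma r_one_inv : (DihedralGroup.r 1 : DihedralGroup n)⁻¹ = .r (-1) :=
  inv_eq_of_mul_eq_one_right (by rw [r_mul_r, add_neg_cancel, ← DihedralGroup.one_def])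

lemma tau0_conj (hord : orderOf σ = n) :
    psi σ x0 y0 hfix hy0 hZ (.sr 0) * σ * psi σ x0 y0 hfix hy0 hZ (.sr 0) = σ⁻¹ := by
  set Ψ := psi σ x0 y0 hfix hy0 hZ with hΨ
  have hr1 : Ψ (.r 1) = σ := psi_r_one σ x0 y0 hfix hy0 hZ hord
  rw [← hr1, ← map_mul, ← map_mul, sr_mul_r, zero_add, sr_mul_sr, zero_sub, ← r_one_inv,
    map_inv]

end

section
variable (σ : Equiv.Perm Z) (x0 y0 : Z)

lemma conj_zpow (ρ : Equiv.Perm Z) (h2 : ρ * ρ = 1) (hc : ρ * σ * ρ = σ⁻¹) (k : ℤ) (z : Z) :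
    ρ ((σ ^ k) z) = (σ ^ (-k)) (ρ z) := by
  have hρ : ρ⁻¹ = ρ := inv_eq_of_mul_eq_one_right h2
  have h1 : (MulAut.conj ρ) σ = σ⁻¹ := by rw [MulAut.conj_apply, hρ]; exact hc
  have h3 : ρ * σ ^ k * ρ⁻¹ = σ ^ (-k) := by
    have := map_zpow (MulAut.conj ρ) σ k
    rw [h1, inv_zpow, ← zpow_neg] at this
    rw [← this, MulAut.conj_apply]
  have h4 : ρ * σ ^ k = σ ^ (-k) * ρ := by
    rw [← h3, inv_mul_cancel_right]
  rw [← Equiv.Perm.mul_apply, h4, Equiv.Perm.mul_apply]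

lemma reflection_eq
    (hcov : ∀ z : Z, (∃ k : ℤ, (σ ^ k) x0 = z) ∨ (∃ k : ℤ, (σ ^ k) y0 = z))
    (τ τ' : Equiv.Perm Z) (hτ2 : τ * τ = 1) (hτc : τ * σ * τ = σ⁻¹)
    (hτ'2 : τ' * τ' = 1) (hτ'c : τ' * σ * τ' = σ⁻¹)
    (hτx : τ x0 = y0) {c : ℤ} (hτ'x : τ' x0 = (σ ^ c) y0) :
    τ' = σ ^ c * τ := by
  have A := conj_zpow σ τ hτ2 hτc
  have A' := conj_zpow σ τ' hτ'2 hτ'c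
  have hτy : τ y0 = x0 := by
    rw [← hτx, ← Equiv.Perm.mul_apply, hτ2, Equiv.Perm.one_apply]
  have hτ'y : τ' y0 = (σ ^ c) x0 := by
    have hy : y0 = (σ ^ (-c)) (τ' x0) := by
      rw [hτ'x, ← Equiv.Perm.mul_apply, ← zpow_add, neg_add_cancel, zpow_zero,
        Equiv.Perm.one_apply]
    rw [hy, A', neg_neg]
    have h5 : τ' (τ' x0) = x0 := by rw [← Equiv.Perm.mul_apply, hτ'2, Equiv.Perm.one_apply]
    rw [h5]
  ext z
  rcases hcov z with ⟨k, rfl⟩ | ⟨k, rfl⟩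
  · rw [A', hτ'x, Equiv.Perm.mul_apply, A, hτx, ← Equiv.Perm.mul_apply, ← Equiv.Perm.mul_apply,
      ← zpow_add, ← zpow_add, add_comm]
  · rw [A', hτ'y, Equiv.Perm.mul_apply, A, hτy, ← Equiv.Perm.mul_apply, ← Equiv.Perm.mul_apply,
      ← zpow_add, ← zpow_add, add_comm]

end
end UDON

/-- A product of two disjoint `n`-cycles lies in exactly one regular subgroup
isomorphic to `D_n`, in which it generates the index-2 subgroup. -/
theorem unique_dihedral_over_nn_cycle (n : ℕ) (hn : 3 ≤ n) {Z : Type*} [Fintype Z]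
    [DecidableEq Z] (hZ : Fintype.card Z = 2 * n) (σ : Equiv.Perm Z)
    (hσ : σ.cycleType = ({n, n} : Multiset ℕ)) :
    (∃! N : Subgroup (Equiv.Perm Z),
        IsRegularSubgroup N ∧ Nonempty (N ≃* DihedralGroup n) ∧ σ ∈ N) ∧
    ∀ N : Subgroup (Equiv.Perm Z),
      IsRegularSubgroup N ∧ Nonempty (N ≃* DihedralGroup n) ∧ σ ∈ N →
        (Subgroup.zpowers σ).relIndex N = 2 := by
  haveI : NeZero n := ⟨by omega⟩
  classical
  -- basic facts about σ
  have hsum := Equiv.Perm.sum_cycleType σ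
  rw [hσ] at hsum
  have hs2 : σ.support.card = 2 * n := by
    simp only [Multiset.insert_eq_cons, Multiset.sum_cons, Multiset.sum_singleton] at hsum
    omega
  have hsupp : σ.support = Finset.univ :=
    Finset.eq_univ_of_card _ (by rw [hs2, hZ])
  have hmem : ∀ z : Z, z ∈ σ.support := fun z => hsupp ▸ Finset.mem_univ z
  have hcyc : ∀ z : Z, (σ.cycleOf z).support.card = n := by
    intro z
    have h2 : σ.cycleOf z ∈ σ.cycleFactorsFinset :=
      Equiv.Perm.cycleOf_mem_cycleFactorsFinset_iff.2 (hmem z)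
    have h3 : (σ.cycleOf z).support.card ∈ σ.cycleType := by
      rw [Equiv.Perm.cycleType_def]
      exact Multiset.mem_map_of_mem _ h2
    rw [hσ] at h3
    simp only [Multiset.insert_eq_cons, Multiset.mem_cons, Multiset.mem_singleton] at h3
    rcases h3 with h3 | h3 <;> exact h3
  have hordn : orderOf σ = n := by
    have h := Equiv.Perm.lcm_cycleType σ
    rw [hσ] at h
    simpa [Nat.lcm_self] using h.symm
  have hzmem : ∀ z : Z, z ∈ (σ.cycleOf z).support := fun z => by
    rw [Equiv.Perm.mem_support_cycleOf_iff]
    exact ⟨Equiv.Perm.SameCycle.refl _ _, hmem z⟩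
  have hfix : ∀ (z : Z) (k : ℤ), (σ ^ k) z = z ↔ (n : ℤ) ∣ k := fun z k => by
    have h := (Equiv.Perm.isCycleOn_support_cycleOf σ z).zpow_apply_eq (hzmem z) (n := k)
    rwa [hcyc z] at h
  -- choose base points
  have hZpos : Nonempty Z := Fintype.card_pos_iff.1 (by rw [hZ]; omega)
  obtain ⟨x0⟩ := hZpos
  have hex : ∃ y0, y0 ∉ (σ.cycleOf x0).support := by
    by_contra h
    push_neg at h
    have huniv : (σ.cycleOf x0).support = Finset.univ := Finset.eq_univ_iff_forall.2 h
    have hcard := congrArg Finset.card huniv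
    rw [hcyc x0, Finset.card_univ, hZ] at hcard
    omega
  obtain ⟨y0, hy0s⟩ := hex
  have hy0 : ∀ k : ℤ, (σ ^ k) x0 ≠ y0 := fun k hk => hy0s (by
    rw [Equiv.Perm.mem_support_cycleOf_iff]
    exact ⟨⟨k, hk⟩, hmem x0⟩)
  have hcov : ∀ z : Z, (∃ k : ℤ, (σ ^ k) x0 = z) ∨ (∃ k : ℤ, (σ ^ k) y0 = z) := by
    intro z
    have hdisj : Disjoint (σ.cycleOf x0).support (σ.cycleOf y0).support := by
      rw [Finset.disjoint_left]
      intro a hax hay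
      rw [Equiv.Perm.mem_support_cycleOf_iff] at hax hay
      obtain ⟨k1, hk1⟩ := hax.1
      obtain ⟨k2, hk2⟩ := hay.1
      exact hy0 (k1 - k2) (UDON.shift σ (hk1.trans hk2.symm))
    have huniv : (σ.cycleOf x0).support ∪ (σ.cycleOf y0).support = Finset.univ := by
      apply Finset.eq_univ_of_card
      rw [Finset.card_union_of_disjoint hdisj, hcyc, hcyc, hZ]
      omega
    have hz : z ∈ (σ.cycleOf x0).support ∪ (σ.cycleOf y0).support :=
      huniv ▸ Finset.mem_univ z
    rcases Finset.mem_union.1 hz with h | h <;>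
      rw [Equiv.Perm.mem_support_cycleOf_iff] at h
    · obtain ⟨i, hi⟩ := h.1
      exact Or.inl ⟨i, hi⟩
    · obtain ⟨i, hi⟩ := h.1
      exact Or.inr ⟨i, hi⟩
  -- the canonical subgroup
  set Ψ : DihedralGroup n →* Equiv.Perm Z := UDON.psi σ x0 y0 hfix hy0 hZ with hΨdef
  set N : Subgroup (Equiv.Perm Z) := Ψ.range with hNdef
  have hNreg : IsRegularSubgroup N :=
    ⟨UDON.psi_range_trans σ x0 y0 hfix hy0 hZ, UDON.psi_range_free σ x0 y0 hfix hy0 hZ⟩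
  have hNiso : Nonempty (N ≃* DihedralGroup n) :=
    ⟨(MonoidHom.ofInjective (UDON.psi_injective σ x0 y0 hfix hy0 hZ)).symm⟩
  have hσN : σ ∈ N := UDON.sigma_mem_range σ x0 y0 hfix hy0 hZ hordn
  -- the distinguished reflection
  set τ0 : Equiv.Perm Z := Ψ (.sr 0) with hτ0def
  have hτ0N : τ0 ∈ N := ⟨.sr 0, rfl⟩
  have hτ0sq : τ0 * τ0 = 1 := UDON.tau0_sq σ x0 y0 hfix hy0 hZ
  have hτ0conj : τ0 * σ * τ0 = σ⁻¹ := UDON.tau0_conj σ x0 y0 hfix hy0 hZ hordn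
  have hτ0x : τ0 x0 = y0 := UDON.tau0_x0 σ x0 y0 hfix hy0 hZ
  -- uniqueness
  have main : ∀ N' : Subgroup (Equiv.Perm Z),
      IsRegularSubgroup N' ∧ Nonempty (N' ≃* DihedralGroup n) ∧ σ ∈ N' → N' = N := by
    rintro N' ⟨hreg, ⟨f⟩, hσN'⟩
    have hcardN' : Nat.card N' = 2 * n := by
      rw [Nat.card_congr f.toEquiv, DihedralGroup.nat_card]
    -- elements outside ⟨σ⟩ are "reflections"
    have hrefl : ∀ g, ∀ hg : g ∈ N', g ∉ Subgroup.zpowers σ →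
        g * g = 1 ∧ g * σ * g = σ⁻¹ := by
      intro g hg hgz
      set s : N' := ⟨σ, hσN'⟩ with hsdef
      set gS : N' := ⟨g, hg⟩ with hgSdef
      have hords : orderOf s = n := by rw [hsdef, Subgroup.orderOf_mk, hordn]
      have hordfs : orderOf (f s) = n := by
        have h := orderOf_injective f.toMonoidHom f.injective s
        rw [hords] at h
        exact h
      obtain ⟨i, hfs⟩ : ∃ i : ZMod n, f s = .r i := by
        cases hc : f s with
        | r i => exact ⟨i, rfl⟩
        | sr i =>
            rw [hc, DihedralGroup.orderOf_sr] at hordfs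
            omega
      have hgcd : Nat.gcd n i.val = 1 := by
        have h4 : n / Nat.gcd n i.val = n := by
          rw [← DihedralGroup.orderOf_r i, ← hfs, hordfs]
        have h3 := Nat.div_mul_cancel (Nat.gcd_dvd_left n i.val)
        rw [h4] at h3
        exact Nat.eq_of_mul_eq_mul_left (by omega)
          (h3.trans (mul_one n).symm)
      have hiu : IsUnit (i : ZMod n) := by
        rw [← ZMod.natCast_zmod_val i]
        exact (ZMod.isUnit_iff_coprime _ _).2 (Nat.coprime_comm.1 hgcd)
      obtain ⟨u, hu⟩ := hiu
      obtain ⟨k, hfg⟩ : ∃ k : ZMod n, f gS = .sr k := by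
        cases hc : f gS with
        | sr k => exact ⟨k, rfl⟩
        | r k =>
            exfalso
            set m : ℕ := ((k * (↑u⁻¹ : ZMod n)) : ZMod n).val with hmdef
            have hfsm : f (s ^ m) = .r k := by
              rw [map_pow, hfs, UDON.r_pow]
              congr 1
              rw [hmdef, ZMod.natCast_zmod_val, ← hu, mul_assoc, ← Units.val_mul,
                inv_mul_cancel, Units.val_one, mul_one]
            have hsm : s ^ m = gS := f.injective (hfsm.trans hc.symm)
            apply hgz
            have hcoe := congrArg (fun x : N' => (x : Equiv.Perm Z)) hsm
            simp only [SubmonoidClass.coe_pow] at hcoe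
            exact ⟨(m : ℤ), by show σ ^ (m : ℤ) = g; rw [zpow_natCast]; exact hcoe⟩
      constructor
      · have h1 : gS * gS = 1 := f.injective (by
          rw [map_mul, hfg, DihedralGroup.sr_mul_sr, sub_self, map_one,
            ← DihedralGroup.one_def])
        have := congrArg (fun x : N' => (x : Equiv.Perm Z)) h1
        simpa using this
      · have h1 : gS * s * gS = s⁻¹ := f.injective (by
          rw [map_mul, map_mul, map_inv, hfg, hfs, DihedralGroup.sr_mul_r,
            DihedralGroup.sr_mul_sr, UDON.r_inv]
          congr 1
          ring)
        have := congrArg (fun x : N' => (x : Equiv.Perm Z)) h1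
        simpa using this
    -- N' ≤ N
    have hle : N' ≤ N := by
      intro g hg
      by_cases hgz : g ∈ Subgroup.zpowers σ
      · obtain ⟨k, rfl⟩ := hgz
        exact Subgroup.zpow_mem N hσN k
      · obtain ⟨hg2, hgc⟩ := hrefl g hg hgz
        obtain ⟨c, hc2⟩ : ∃ c : ℤ, (σ ^ c) y0 = g x0 := by
          rcases hcov (g x0) with ⟨k, hk⟩ | h
          · exfalso
            set uu : Equiv.Perm Z := σ ^ (-k) * g with huu
            have huuN : uu ∈ N' := N'.mul_mem (N'.zpow_mem hσN' _) hg
            have huux : uu x0 = x0 := by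
              rw [huu, Equiv.Perm.mul_apply, ← hk, ← Equiv.Perm.mul_apply, ← zpow_add,
                neg_add_cancel, zpow_zero, Equiv.Perm.one_apply]
            by_cases h1 : uu = 1
            · apply hgz
              refine ⟨k, ?_⟩
              have h2 : σ ^ (-k) * g = 1 := h1
              rw [← mul_eq_one_iff_inv_eq.1 h2, zpow_neg, inv_inv]
            · exact hreg.2 uu huuN h1 x0 huux
          · exact h
        have hgeq : g = σ ^ c * τ0 :=
          UDON.reflection_eq σ x0 y0 hcov τ0 g hτ0sq hτ0conj hg2 hgc hτ0x hc2.symm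
        rw [hgeq]
        exact N.mul_mem (N.zpow_mem hσN c) hτ0N
    have hcardN : Nat.card N = 2 * n := by
      rw [Nat.card_congr hNiso.some.toEquiv, DihedralGroup.nat_card]
    exact Subgroup.eq_of_le_of_card_ge hle (by rw [hcardN, hcardN'])
  refine ⟨⟨N, ⟨hNreg, hNiso, hσN⟩, main⟩, ?_⟩
  rintro N' ⟨hreg, hiso, hσN'⟩
  have hle : Subgroup.zpowers σ ≤ N' := Subgroup.zpowers_le.2 hσN'
  have hcN' : Nat.card N' = 2 * n := by
    rw [Nat.card_congr hiso.some.toEquiv, DihedralGroup.nat_card]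
  have h1 : Nat.card ((Subgroup.zpowers σ).subgroupOf N') = n := by
    rw [Nat.card_congr (Subgroup.subgroupOfEquivOfLe hle).toEquiv, Nat.card_zpowers, hordn]
  have h2 := Subgroup.card_mul_index ((Subgroup.zpowers σ).subgroupOf N')
  rw [h1, hcN'] at h2
  have : (Subgroup.zpowers σ).relIndex N' = ((Subgroup.zpowers σ).subgroupOf N').index := rfl
  rw [this]
  exact Nat.eq_of_mul_eq_mul_left (show 0 < n by omega) (by rw [h2]; ring)
end

section
/- For every integer n ≥ 3, the cardinality of ℋ(D_n) = { N ≤ Hol(D_n) : N regular, N ≅ D_n, Norm_B(N) = Hol(D_n) } equals the cardinality of T(D_n) = Norm_B(Hol(D_n))/Hol(D_n), and both equal |Υ_n|, the number of units of exponent 2 mod n. -/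
/-- The holomorph `Hol(G) = Norm_B(λ(G))` inside `B = Perm G`. -/
def holSubgroup (G : Type*) [Group G] : Subgroup (Equiv.Perm G) :=
  Subgroup.normalizer (leftRegRange G : Set (Equiv.Perm G))

/-- `ℋ(G)`: regular subgroups of `Hol(G)` isomorphic to `G` whose normalizer is `Hol(G)`. -/
def multHolClass (G : Type*) [Group G] : Set (Subgroup (Equiv.Perm G)) :=
  {N | N ≤ holSubgroup G ∧ IsRegularSubgroup N ∧ Nonempty (N ≃* G) ∧
    Subgroup.normalizer (N : Set (Equiv.Perm G)) = holSubgroup G}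


set_option linter.unusedSectionVars false
set_option maxHeartbeats 1000000

section ConjSub
variable {G : Type*}

/-- conjugation of a subgroup of Perm -/
abbrev conjSub (φ : Equiv.Perm G) (H : Subgroup (Equiv.Perm G)) : Subgroup (Equiv.Perm G) :=
  H.map (MulAut.conj φ).toMonoidHom

lemma mem_conjSub {φ : Equiv.Perm G} {H : Subgroup (Equiv.Perm G)} {σ : Equiv.Perm G} :
    σ ∈ conjSub φ H ↔ ∃ τ ∈ H, φ * τ * φ⁻¹ = σ := by
  simp [conjSub, Subgroup.mem_map, MulAut.conj]

lemma conjSub_normalizer (φ : Equiv.Perm G) (H : Subgroup (Equiv.Perm G)) :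
    Subgroup.normalizer (conjSub φ H : Set (Equiv.Perm G)) = conjSub φ (Subgroup.normalizer (H : Set (Equiv.Perm G))) :=
  (Subgroup.map_equiv_normalizer_eq H (MulAut.conj φ)).symm

lemma conjSub_mul (φ ψ : Equiv.Perm G) (H : Subgroup (Equiv.Perm G)) :
    conjSub (φ * ψ) H = conjSub φ (conjSub ψ H) := by
  ext σ; simp only [mem_conjSub]
  constructor
  · rintro ⟨τ, hτ, rfl⟩; exact ⟨ψ*τ*ψ⁻¹, ⟨τ, hτ, rfl⟩, by group⟩
  · rintro ⟨τ', ⟨τ, hτ, rfl⟩, rfl⟩; exact ⟨τ, hτ, by group⟩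

lemma conjSub_one (H : Subgroup (Equiv.Perm G)) : conjSub 1 H = H := by
  ext σ; simp only [mem_conjSub]
  constructor
  · rintro ⟨τ, hτ, rfl⟩; simpa using hτ
  · intro h; exact ⟨σ, h, by group⟩

lemma conjSub_eq_of_mem_normalizer {φ : Equiv.Perm G} {H : Subgroup (Equiv.Perm G)}
    (h : φ ∈ Subgroup.normalizer (H : Set (Equiv.Perm G))) : conjSub φ H = H := by
  ext σ
  rw [mem_conjSub]
  constructor
  · rintro ⟨τ, hτ, rfl⟩; exact (Subgroup.mem_normalizer_iff.1 h τ).1 hτ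
  · intro hσ
    refine ⟨φ⁻¹ * σ * φ, ?_, by group⟩
    have := (Subgroup.mem_normalizer_iff.1 h (φ⁻¹ * σ * φ))
    rw [this]
    have : φ * (φ⁻¹ * σ * φ) * φ⁻¹ = σ := by group
    rw [this]; exact hσ

lemma mem_normalizer_of_conjSub_eq {φ : Equiv.Perm G} {H : Subgroup (Equiv.Perm G)}
    (h : conjSub φ H = H) : φ ∈ Subgroup.normalizer (H : Set (Equiv.Perm G)) := by
  rw [Subgroup.mem_normalizer_iff]
  intro τ
  constructor
  · intro hτ; rw [← h]; exact mem_conjSub.2 ⟨τ, hτ, rfl⟩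
  · intro hτ
    rw [← h] at hτ
    obtain ⟨τ', hτ', he⟩ := mem_conjSub.1 hτ
    have : τ' = τ := by
      have := congrArg (fun x => φ⁻¹ * x * φ) he
      simpa [mul_assoc] using this
    rwa [← this]

lemma conjSub_fixSub_card (φ : Equiv.Perm G) (H : Subgroup (Equiv.Perm G)) :
    Nat.card (conjSub φ H) = Nat.card H :=
  (Nat.card_congr (Subgroup.equivMapOfInjective H _ (MulAut.conj φ).injective).toEquiv).symm

lemma conj_regular {φ : Equiv.Perm G} {H : Subgroup (Equiv.Perm G)}
    (h : IsRegularSubgroup H) : IsRegularSubgroup (conjSub φ H) := by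
  obtain ⟨ht, hf⟩ := h
  constructor
  · intro z w
    obtain ⟨σ, hσ, he⟩ := ht (φ⁻¹ z) (φ⁻¹ w)
    refine ⟨φ * σ * φ⁻¹, mem_conjSub.2 ⟨σ, hσ, rfl⟩, ?_⟩
    simp only [Equiv.Perm.coe_mul, Function.comp_apply, he]
    simp
  · intro σ hσ hne z hz
    obtain ⟨τ, hτ, rfl⟩ := mem_conjSub.1 hσ
    have hτne : τ ≠ 1 := by
      rintro rfl; exact hne (by group)
    exact hf τ hτ hτne (φ⁻¹ z) (by
      have : φ (τ (φ⁻¹ z)) = z := hz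
      have := congrArg (fun x => φ⁻¹ x) this
      simpa using this)

end ConjSub

section Part1
variable {G : Type*} [Group G]

lemma lam_injective : Function.Injective (MulAction.toPermHom G G) := by
  intro a b h
  have := congrArg (fun σ : Equiv.Perm G => σ 1) h
  simpa using this

lemma lam_regular : IsRegularSubgroup (leftRegRange G) := by
  constructor
  · intro z w
    exact ⟨MulAction.toPermHom G G (w * z⁻¹), ⟨_, rfl⟩, by simp [mul_assoc]⟩
  · rintro σ ⟨g, rfl⟩ hne z h
    apply hne
    have hgz : g * z = z := h
    have hg : g = 1 := mul_right_cancel (a := g) (b := z) (c := 1) (by simpa using hgz)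
    rw [hg, map_one]

/-- a regular subgroup abstractly isomorphic to `G` is a conjugate of the left regular image -/
lemma conj_of_regular {N : Subgroup (Equiv.Perm G)} (hreg : IsRegularSubgroup N)
    (f : N ≃* G) : ∃ φ : Equiv.Perm G, conjSub φ (leftRegRange G) = N := by
  obtain ⟨ht, hf⟩ := hreg
  have einj : Function.Injective (fun ν : N => (ν : Equiv.Perm G) 1) := by
    intro ν ν' h
    have h1 : ((ν'⁻¹ * ν : N) : Equiv.Perm G) 1 = 1 := by
      simp only [Subgroup.coe_mul, Equiv.Perm.coe_mul, Function.comp_apply, InvMemClass.coe_inv]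
      simp only [h]
      simp
    have h2 : ((ν'⁻¹ * ν : N) : Equiv.Perm G) = 1 := by
      by_contra hne
      exact hf _ (ν'⁻¹ * ν).2 hne 1 h1
    have h3 : (ν'⁻¹ * ν : N) = 1 := Subtype.ext (by simpa using h2)
    exact (inv_mul_eq_one.mp h3).symm
  have esurj : Function.Surjective (fun ν : N => (ν : Equiv.Perm G) 1) := by
    intro w
    obtain ⟨σ, hσ, he⟩ := ht 1 w
    exact ⟨⟨σ, hσ⟩, he⟩
  let e : N ≃ G := Equiv.ofBijective _ ⟨einj, esurj⟩
  let φ : Equiv.Perm G := (f.symm.toEquiv.trans e)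
  have key : ∀ g : G, φ * (MulAction.toPermHom G G g) * φ⁻¹ = ((f.symm g : N) : Equiv.Perm G) := by
    intro g
    ext z
    simp only [Equiv.Perm.coe_mul, Function.comp_apply]
    have hz : φ⁻¹ z = φ.symm z := rfl
    rw [hz]
    have : ∀ h : G, φ h = ((f.symm h : N) : Equiv.Perm G) 1 := fun h => rfl
    have hmul : ∀ g h : G, φ (g * h) = ((f.symm g : N) : Equiv.Perm G) (φ h) := by
      intro g h
      rw [this (g * h), map_mul]
      simp only [Subgroup.coe_mul, Equiv.Perm.coe_mul, Function.comp_apply]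
      rfl
    have : (MulAction.toPermHom G G g) (φ.symm z) = g * (φ.symm z) := rfl
    rw [this, hmul]
    simp
  refine ⟨φ, le_antisymm ?_ ?_⟩
  · rintro σ hσ
    obtain ⟨τ, ⟨g, rfl⟩, rfl⟩ := mem_conjSub.1 hσ
    rw [key]
    exact (f.symm g).2
  · intro ν hν
    refine mem_conjSub.2 ⟨MulAction.toPermHom G G (f ⟨ν, hν⟩), ⟨_, rfl⟩, ?_⟩
    rw [key]
    simp

theorem card_multHolClass_eq (G : Type*) [Group G] :
    Nat.card (multHolClass G) =
      (holSubgroup G).relIndex (Subgroup.normalizer (holSubgroup G : Set (Equiv.Perm G))) := by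
  classical
  set NH := Subgroup.normalizer (holSubgroup G : Set (Equiv.Perm G)) with hNH
  set H' := (holSubgroup G).subgroupOf NH with hH'
  have hmem : ∀ φ : NH, conjSub (φ : Equiv.Perm G) (leftRegRange G) ∈ multHolClass G := by
    intro φ
    have hnorm : Subgroup.normalizer (conjSub (φ : Equiv.Perm G) (leftRegRange G) : Set (Equiv.Perm G)) = holSubgroup G := by
      rw [conjSub_normalizer]
      exact conjSub_eq_of_mem_normalizer φ.2
    refine ⟨?_, conj_regular lam_regular, ?_, hnorm⟩
    · rw [← hnorm]; exact Subgroup.le_normalizer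
    · exact ⟨((Subgroup.equivMapOfInjective (leftRegRange G) _
        (MulAut.conj (φ : Equiv.Perm G)).injective).symm).trans
        (MonoidHom.ofInjective lam_injective).symm⟩
  let F : NH → multHolClass G := fun φ => ⟨conjSub (φ : Equiv.Perm G) (leftRegRange G), hmem φ⟩
  have wd : ∀ a b : NH, (QuotientGroup.leftRel H') a b → F a = F b := by
    intro a b hab
    rw [QuotientGroup.leftRel_apply] at hab
    have hab' : ((a : Equiv.Perm G))⁻¹ * (b : Equiv.Perm G) ∈ holSubgroup G := hab
    apply Subtype.ext
    show conjSub _ _ = conjSub _ _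
    have : (b : Equiv.Perm G) = (a : Equiv.Perm G) * ((a : Equiv.Perm G)⁻¹ * (b : Equiv.Perm G)) := by
      group
    rw [this, conjSub_mul, conjSub_eq_of_mem_normalizer hab']
  let q : NH ⧸ H' → multHolClass G := fun x => Quotient.liftOn' x F wd
  have hinj : Function.Injective q := by
    intro x y
    refine Quotient.inductionOn₂' x y ?_
    intro a b hab
    have h1 : conjSub (a : Equiv.Perm G) (leftRegRange G)
        = conjSub (b : Equiv.Perm G) (leftRegRange G) := congrArg Subtype.val hab
    have h2 : ((a : Equiv.Perm G))⁻¹ * (b : Equiv.Perm G) ∈ Subgroup.normalizer (leftRegRange G : Set (Equiv.Perm G)) := by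
      apply mem_normalizer_of_conjSub_eq
      rw [conjSub_mul, ← h1]
      have : conjSub ((a : Equiv.Perm G))⁻¹ (conjSub (a : Equiv.Perm G) (leftRegRange G))
          = conjSub (((a : Equiv.Perm G))⁻¹ * (a : Equiv.Perm G)) (leftRegRange G) :=
        (conjSub_mul _ _ _).symm
      rw [this]
      simp [conjSub_one]
    apply Quotient.sound'
    rw [QuotientGroup.leftRel_apply]
    exact h2
  have hsurj : Function.Surjective q := by
    rintro ⟨N, hle, hreg, ⟨f⟩, hnorm⟩
    obtain ⟨φ, hφ⟩ := conj_of_regular hreg f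
    have hφN : φ ∈ NH := by
      apply mem_normalizer_of_conjSub_eq
      show conjSub φ (holSubgroup G) = holSubgroup G
      rw [holSubgroup, ← conjSub_normalizer, hφ, hnorm]; rfl
    refine ⟨QuotientGroup.mk (⟨φ, hφN⟩ : NH), ?_⟩
    apply Subtype.ext
    exact hφ
  have : Nat.card (NH ⧸ H') = Nat.card (multHolClass G) := Nat.card_eq_of_bijective q ⟨hinj, hsurj⟩
  rw [← this]
  rfl

end Part1

namespace P2
open DihedralGroup Equiv
variable {n : ℕ}

def hp (ε : Bool) (g : (ZMod n)ˣ) (a c : ZMod n) : Equiv.Perm (DihedralGroup n) where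
  toFun x := match ε, x with
    | false, r t => r (g * t + a)
    | false, sr t => sr (g * t + c)
    | true, r t => sr (g * t + a)
    | true, sr t => r (g * t + c)
  invFun x := match ε, x with
    | false, r t => r (↑g⁻¹ * (t - a))
    | false, sr t => sr (↑g⁻¹ * (t - c))
    | true, r t => sr (↑g⁻¹ * (t - c))
    | true, sr t => r (↑g⁻¹ * (t - a))
  left_inv := by
    rintro (t | t) <;> cases ε <;>
      simp [add_sub_cancel_right, Units.inv_mul_cancel_left]
  right_inv := by
    rintro (t | t) <;> cases ε <;>
      simp [Units.mul_inv_cancel_left, sub_add_cancel]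

@[simp] lemma hp_false_r (g : (ZMod n)ˣ) (a c t : ZMod n) :
    hp false g a c (r t) = r ((g : ZMod n) * t + a) := rfl
@[simp] lemma hp_false_sr (g : (ZMod n)ˣ) (a c t : ZMod n) :
    hp false g a c (sr t) = sr ((g : ZMod n) * t + c) := rfl
@[simp] lemma hp_true_r (g : (ZMod n)ˣ) (a c t : ZMod n) :
    hp true g a c (r t) = sr ((g : ZMod n) * t + a) := rfl
@[simp] lemma hp_true_sr (g : (ZMod n)ˣ) (a c t : ZMod n) :
    hp true g a c (sr t) = r ((g : ZMod n) * t + c) := rfl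

lemma hp_mul (ε₁ ε₂ : Bool) (g₁ g₂ : (ZMod n)ˣ) (a₁ c₁ a₂ c₂ : ZMod n) :
    hp ε₁ g₁ a₁ c₁ * hp ε₂ g₂ a₂ c₂ =
      hp (xor ε₁ ε₂) (g₁ * g₂) (↑g₁ * a₂ + cond ε₂ c₁ a₁) (↑g₁ * c₂ + cond ε₂ a₁ c₁) := by
  ext x
  cases ε₁ <;> cases ε₂ <;> rcases x with t | t <;>
    (simp [Equiv.Perm.mul_apply]; ring)

lemma hp_inv (ε : Bool) (g : (ZMod n)ˣ) (a c : ZMod n) :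
    (hp ε g a c)⁻¹ =
      hp ε g⁻¹ (cond ε (-(↑g⁻¹ * c)) (-(↑g⁻¹ * a))) (cond ε (-(↑g⁻¹ * a)) (-(↑g⁻¹ * c))) := by
  ext x
  show (hp ε g a c).symm x = _
  cases ε <;> rcases x with t | t <;>
    (simp [hp]; ring)

lemma hp_one : (hp false 1 0 0 : Equiv.Perm (DihedralGroup n)) = 1 := by
  ext x
  rcases x with t | t <;> simp

def SH (n : ℕ) : Subgroup (Equiv.Perm (DihedralGroup n)) where
  carrier := {σ | ∃ ε g a c, σ = hp ε g a c}
  one_mem' := ⟨false, 1, 0, 0, hp_one.symm⟩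
  mul_mem' := by
    rintro σ τ ⟨ε₁, g₁, a₁, c₁, rfl⟩ ⟨ε₂, g₂, a₂, c₂, rfl⟩
    exact ⟨_, _, _, _, hp_mul _ _ _ _ _ _ _ _⟩
  inv_mem' := by
    rintro σ ⟨ε, g, a, c, rfl⟩
    exact ⟨_, _, _, _, hp_inv _ _ _ _⟩

lemma mem_SH {σ : Equiv.Perm (DihedralGroup n)} :
    σ ∈ SH n ↔ ∃ ε g a c, σ = hp ε g a c := Iff.rfl

lemma hp_eq_iff {ε ε' : Bool} {g g' : (ZMod n)ˣ} {a c a' c' : ZMod n}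
    (h : hp ε g a c = hp ε' g' a' c') : ε = ε' ∧ g = g' ∧ a = a' ∧ c = c' := by
  have h0 := congrArg (fun σ : Equiv.Perm (DihedralGroup n) => σ (r 0)) h
  have h1 := congrArg (fun σ : Equiv.Perm (DihedralGroup n) => σ (r 1)) h
  have h2 := congrArg (fun σ : Equiv.Perm (DihedralGroup n) => σ (sr 0)) h
  cases ε <;> cases ε' <;> simp [-DihedralGroup.r_zero] at h0 h1 h2
  · obtain rfl : a = a' := h0
    refine ⟨rfl, Units.ext (by simpa using h1), rfl, by simpa using h2⟩
  · obtain rfl : a = a' := h0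
    refine ⟨rfl, Units.ext (by simpa using h1), rfl, by simpa using h2⟩


/-- the left regular rep, specialized -/
abbrev lam : DihedralGroup n →* Equiv.Perm (DihedralGroup n) :=
  MulAction.toPermHom (DihedralGroup n) (DihedralGroup n)

@[simp] lemma lam_apply (x z : DihedralGroup n) : lam x z = x * z := rfl

lemma lam_r (b : ZMod n) : (lam (r b) : Equiv.Perm (DihedralGroup n)) = hp false 1 b (-b) := by
  ext x
  rcases x with t | t <;> simp <;> ring

lemma lam_sr (b : ZMod n) : (lam (sr b) : Equiv.Perm (DihedralGroup n)) = hp true 1 b (-b) := by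
  ext x
  rcases x with t | t <;> simp <;> ring

lemma swap_lam {π : Equiv.Perm (DihedralGroup n)} (hπ : π ∈ SH n) (x : DihedralGroup n) :
    ∃ x', π * lam x = lam x' * π := by
  obtain ⟨ε, g, a, c, rfl⟩ := mem_SH.1 hπ
  rcases x with b | b
  · refine ⟨r (cond ε (-(↑g * b)) (↑g * b)), ?_⟩
    cases ε <;>
      (rw [lam_r, lam_r, hp_mul, hp_mul]; congr 1 <;> simp <;> ring)
  · refine ⟨sr (cond ε (a - ↑g * b - c) (↑g * b + c - a)), ?_⟩
    cases ε <;>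
      (rw [lam_sr, lam_sr, hp_mul, hp_mul]; congr 1 <;> simp <;> ring)

lemma SH_le_norm : SH n ≤ Subgroup.normalizer (leftRegRange (DihedralGroup n) : Set (Equiv.Perm (DihedralGroup n))) := by
  intro π hπ
  rw [Subgroup.mem_normalizer_iff]
  intro τ
  constructor
  · rintro ⟨x, rfl⟩
    obtain ⟨x', he⟩ := swap_lam hπ x
    have h2 : π * lam x * π⁻¹ = lam x' := by rw [he]; group
    exact ⟨x', h2.symm⟩
  · rintro ⟨y, hy⟩
    obtain ⟨y', he'⟩ := swap_lam ((SH n).inv_mem hπ) y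
    refine ⟨y', ?_⟩
    have : τ = π⁻¹ * lam y * π := by rw [hy]; group
    rw [this, he']
    group

lemma rpow (a : ZMod n) (k : ℕ) : (r a) ^ k = r ((k : ZMod n) * a) := by
  induction k with
  | zero => simp [DihedralGroup.one_def, -DihedralGroup.r_zero]
  | succ k ih => rw [pow_succ, ih, r_mul_r]; push_cast; ring_nf

lemma norm_le_SH (hn : 3 ≤ n) : Subgroup.normalizer (leftRegRange (DihedralGroup n) : Set (Equiv.Perm (DihedralGroup n))) ≤ SH n := by
  haveI : NeZero n := ⟨by omega⟩
  intro ψ hψ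
  have key : ∀ x, ∃ y, ψ * lam x * ψ⁻¹ = lam y := by
    intro x
    have h1 : ψ * lam x * ψ⁻¹ ∈ leftRegRange (DihedralGroup n) :=
      (Subgroup.mem_normalizer_iff.1 hψ (lam x)).1 ⟨x, rfl⟩
    obtain ⟨y, hy⟩ := h1
    exact ⟨y, hy.symm⟩
  let θ : DihedralGroup n → DihedralGroup n := fun x => Classical.choose (key x)
  have hθ : ∀ x, ψ * lam x * ψ⁻¹ = lam (θ x) := fun x => Classical.choose_spec (key x)
  have θhom : ∀ x y, θ (x * y) = θ x * θ y := by
    intro x y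
    apply lam_injective
    rw [map_mul, ← hθ, ← hθ, ← hθ, map_mul]
    group
  have θone : θ 1 = 1 := by
    apply lam_injective
    rw [← hθ, map_one]
    group
  have θinj : Function.Injective θ := by
    intro x x' h
    apply lam_injective
    have := congrArg lam h
    rw [← hθ, ← hθ] at this
    have := congrArg (fun σ => ψ⁻¹ * σ * ψ) this
    simpa [mul_assoc] using this
  have θsurj : Function.Surjective θ := by
    intro y
    have h1 : ψ⁻¹ * lam y * ψ ∈ leftRegRange (DihedralGroup n) := by
      rw [Subgroup.mem_normalizer_iff.1 hψ (ψ⁻¹ * lam y * ψ)]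
      have : ψ * (ψ⁻¹ * lam y * ψ) * ψ⁻¹ = lam y := by group
      rw [this]; exact ⟨y, rfl⟩
    obtain ⟨x, hx⟩ := h1
    refine ⟨x, lam_injective ?_⟩
    rw [← hθ, hx]
    group
  have θpow : ∀ (x : DihedralGroup n) (k : ℕ), θ (x ^ k) = (θ x) ^ k := by
    intro x k
    induction k with
    | zero => simpa using θone
    | succ k ih => rw [pow_succ, θhom, ih, pow_succ]
  -- θ (r 1) is a rotation
  obtain ⟨g₀, hg₀⟩ : ∃ g₀, θ (r 1) = r g₀ := by
    rcases he : θ (r 1) with j | j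
    · exact ⟨j, rfl⟩
    · exfalso
      have h2 : θ (r 1 * r 1) = 1 := by rw [θhom, he, sr_mul_sr]; simp [DihedralGroup.one_def, -DihedralGroup.r_zero]
      have h3 : r 1 * r 1 = (1 : DihedralGroup n) := θinj (by rw [h2, θone])
      rw [r_mul_r, DihedralGroup.one_def] at h3
      have h4 : (1 + 1 : ZMod n) = 0 := by injection h3
      have h5 : ((2 : ℕ) : ZMod n) = 0 := by push_cast; linear_combination h4
      rw [ZMod.natCast_eq_zero_iff] at h5
      have := Nat.le_of_dvd (by norm_num) h5
      omega
  have θr : ∀ t, θ (r t) = r (g₀ * t) := by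
    intro t
    have h1 : r t = (r 1 : DihedralGroup n) ^ t.val := by
      rw [r_one_pow]
      simp [ZMod.natCast_val, ZMod.cast_id]
    rw [h1, θpow, hg₀, rpow]
    congr 1
    rw [mul_comm]
    congr 1
    rw [ZMod.natCast_val, ZMod.cast_id]
  obtain ⟨h₀, hh₀⟩ : ∃ h₀, θ (sr 0) = sr h₀ := by
    rcases he : θ (sr 0) with j | j
    · exfalso
      obtain ⟨x, hx⟩ := θsurj (sr 0)
      rcases x with t | t
      · rw [θr] at hx; exact absurd hx (by simp)
      · have : sr t = sr 0 * r t := by rw [sr_mul_r, zero_add]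
        rw [this, θhom, he, θr, r_mul_r] at hx
        exact absurd hx (by simp)
    · exact ⟨j, rfl⟩
  have θsr : ∀ t, θ (sr t) = sr (h₀ + g₀ * t) := by
    intro t
    have : sr t = sr 0 * r t := by rw [sr_mul_r, zero_add]
    rw [this, θhom, hh₀, θr, sr_mul_r]
  -- g₀ is a unit
  have gmulinj : Function.Injective (fun t : ZMod n => g₀ * t) := by
    intro t t' h
    have : θ (r t) = θ (r t') := by rw [θr, θr]; simpa using h
    have := θinj this
    injection this
  have gsurj : Function.Surjective (fun t : ZMod n => g₀ * t) :=
    Finite.surjective_of_injective gmulinj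
  obtain ⟨b, hb⟩ := gsurj 1
  have gunit : IsUnit g₀ := IsUnit.of_mul_eq_one b hb
  set gU := gunit.unit with hgU
  have hgUval : (gU : ZMod n) = g₀ := gunit.unit_spec
  set π : Equiv.Perm (DihedralGroup n) := hp false gU 0 h₀ with hπ
  have comm : ∀ x, π * lam x = lam (θ x) * π := by
    intro x
    rcases x with b | b
    · rw [θr, lam_r, lam_r, hπ, hp_mul, hp_mul]
      congr 1 <;> simp [hgUval] <;> ring
    · rw [θsr, lam_sr, lam_sr, hπ, hp_mul, hp_mul]
      congr 1 <;> simp [hgUval] <;> ring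
  set ξ := π⁻¹ * ψ with hξ
  have hcomm : ∀ x, ξ * lam x = lam x * ξ := by
    intro x
    have h1 : ψ * lam x = lam (θ x) * ψ := by
      have := hθ x
      have := congrArg (fun σ => σ * ψ) this
      simpa [mul_assoc] using this
    have h2 : π⁻¹ * lam (θ x) = lam x * π⁻¹ := by
      have h0 := comm x
      have h0' := congrArg (fun σ => π⁻¹ * σ * π⁻¹) h0
      simpa [mul_assoc] using h0'.symm
    calc ξ * lam x = π⁻¹ * (ψ * lam x) := by rw [hξ, mul_assoc]
    _ = π⁻¹ * lam (θ x) * ψ := by rw [h1, mul_assoc]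
    _ = lam x * ξ := by rw [h2, hξ]; group
  have hxy : ∀ x, ξ x = x * ξ 1 := by
    intro x
    have h1 : x = lam x 1 := by simp
    conv_lhs => rw [h1]
    have : ξ (lam x 1) = (ξ * lam x) 1 := rfl
    rw [this, hcomm x]
    rfl
  have hξSH : ξ ∈ SH n := by
    rcases he : ξ 1 with b | b
    · refine mem_SH.2 ⟨false, 1, b, b, ?_⟩
      ext x
      rcases x with t | t <;> rw [hxy, he] <;> simp <;> ring
    · refine mem_SH.2 ⟨true, -1, b, b, ?_⟩
      ext x
      rcases x with t | t <;> rw [hxy, he] <;> simp <;> ring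
  have : ψ = π * ξ := by rw [hξ]; group
  rw [this]
  exact (SH n).mul_mem (mem_SH.2 ⟨false, gU, 0, h₀, rfl⟩) hξSH


/-- the rotations -/
def RX (n : ℕ) : Set (DihedralGroup n) := Set.range DihedralGroup.r

lemma mem_RX {x : DihedralGroup n} : x ∈ RX n ↔ ∃ t, x = r t := by
  simp [RX, eq_comm]

lemma compl_RX : (RX n)ᶜ = Set.range DihedralGroup.sr := by
  ext x
  rcases x with t | t <;> simp [RX]

lemma mem_compl_RX {x : DihedralGroup n} : x ∈ (RX n)ᶜ ↔ ∃ t, x = sr t := by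
  rw [compl_RX]; simp [eq_comm]

/-- pointwise stabilizer of a set, as a subgroup of Perm -/
def fixSub {Z : Type*} (S : Set Z) : Subgroup (Equiv.Perm Z) where
  carrier := {σ | ∀ z ∈ S, σ z = z}
  one_mem' := by intro z _; rfl
  mul_mem' := by
    intro σ τ hσ hτ z hz
    simp only [Equiv.Perm.mul_apply, hτ z hz, hσ z hz]
  inv_mem' := by
    intro σ hσ z hz
    have := hσ z hz
    conv_lhs => rw [← this]
    simp

lemma mem_fixSub {Z : Type*} {S : Set Z} {σ : Equiv.Perm Z} :
    σ ∈ fixSub S ↔ ∀ z ∈ S, σ z = z := Iff.rfl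

abbrev PS (n : ℕ) (S : Set (DihedralGroup n)) : Subgroup (Equiv.Perm (DihedralGroup n)) :=
  SH n ⊓ fixSub S

lemma card_PS_RX [NeZero n] : Nat.card (PS n (RX n)) = n := by
  have hf : Function.Bijective (fun c : ZMod n =>
      (⟨hp false 1 0 c, mem_SH.2 ⟨false, 1, 0, c, rfl⟩, by
        rintro z ⟨t, rfl⟩
        simp⟩ : PS n (RX n))) := by
    constructor
    · intro c c' h
      have h2 : hp false 1 0 c = hp false (1 : (ZMod n)ˣ) 0 c' := congrArg Subtype.val h
      exact (hp_eq_iff h2).2.2.2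
    · rintro ⟨σ, hσSH, hσfix⟩
      obtain ⟨ε, g, a, c, rfl⟩ := mem_SH.1 hσSH
      have h0 := hσfix (r 0) ⟨0, rfl⟩
      have h1 := hσfix (r 1) ⟨1, rfl⟩
      cases ε
      · simp [-DihedralGroup.r_zero] at h0 h1
        obtain rfl : a = 0 := by simpa using h0
        obtain rfl : g = 1 := Units.ext (by simpa using h1)
        exact ⟨c, rfl⟩
      · simp [-DihedralGroup.r_zero] at h0
  have h2 := Nat.card_eq_of_bijective _ hf
  rw [← h2, Nat.card_zmod]

lemma unitval_det {g g' : (ZMod n)ˣ} (h : (g : ZMod n) = g') : g = g' := Units.ext h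

lemma card_PS_mixed (hn : 3 ≤ n) {S : Set (DihedralGroup n)} {p q : ZMod n}
    (hp1 : r p ∈ S) (hp2 : sr q ∈ S) : Nat.card (PS n S) < n := by
  haveI : NeZero n := ⟨by omega⟩
  haveI : Fact (1 < n) := ⟨by omega⟩
  classical
  -- each element of PS is determined by a unit g, with value at r (p+1) equal to r (g + p)
  have hform : ∀ σ : PS n S, ∃ g : (ZMod n)ˣ,
      (σ : Equiv.Perm (DihedralGroup n)) = hp false g (p - g * p) (q - g * q) := by
    rintro ⟨σ, hσSH, hσfix⟩
    obtain ⟨ε, g, a, c, rfl⟩ := mem_SH.1 hσSH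
    have h0 := hσfix (r p) hp1
    have h1 := hσfix (sr q) hp2
    cases ε
    · simp at h0 h1
      refine ⟨g, ?_⟩
      have ha : a = p - g * p := by linear_combination h0
      have hc : c = q - g * q := by linear_combination h1
      show hp false g a c = _
      rw [ha, hc]
    · simp at h0
  let F : PS n S → ZMod n := fun σ => ((Classical.choose (hform σ) : (ZMod n)ˣ) : ZMod n) + p
  have hFval : ∀ σ : PS n S, (σ : Equiv.Perm (DihedralGroup n)) =
      hp false (Classical.choose (hform σ)) (p - (Classical.choose (hform σ)) * p)
        (q - (Classical.choose (hform σ)) * q) := fun σ => Classical.choose_spec (hform σ)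
  have hFinj : Function.Injective F := by
    intro σ σ' h
    have hg : Classical.choose (hform σ) = Classical.choose (hform σ') := by
      apply unitval_det
      have : ((Classical.choose (hform σ) : (ZMod n)ˣ) : ZMod n) + p = ((Classical.choose (hform σ') : (ZMod n)ˣ) : ZMod n) + p := h
      linear_combination this
    apply Subtype.ext
    rw [hFval σ, hFval σ', hg]
  have hFnot : p ∉ Set.range F := by
    rintro ⟨σ, hσ⟩
    have : ((Classical.choose (hform σ) : (ZMod n)ˣ) : ZMod n) = 0 := by
      have : ((Classical.choose (hform σ) : (ZMod n)ˣ) : ZMod n) + p = p := hσ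
      linear_combination this
    exact Units.ne_zero _ this
  haveI : Fintype (PS n S) := Fintype.ofFinite _
  have := Fintype.card_lt_of_injective_of_notMem F hFinj hFnot
  rw [Nat.card_eq_fintype_card]
  calc Fintype.card (PS n S) < Fintype.card (ZMod n) := this
  _ = n := ZMod.card n


lemma conjSub_fixSub {Z : Type*} (ψ : Equiv.Perm Z) (S : Set Z) :
    conjSub ψ (fixSub S) = fixSub (ψ '' S) := by
  ext σ
  rw [mem_conjSub]
  constructor
  · rintro ⟨τ, hτ, rfl⟩ z ⟨x, hx, rfl⟩
    simp [Equiv.Perm.mul_apply, hτ x hx]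
  · intro h
    refine ⟨ψ⁻¹ * σ * ψ, ?_, by group⟩
    intro z hz
    have := h (ψ z) ⟨z, hz, rfl⟩
    simp [Equiv.Perm.mul_apply, this]

lemma ncard_RX [NeZero n] : (RX n).ncard = n := by
  have e : ZMod n ≃ (RX n) := Equiv.ofInjective _ (fun a b h => by injection h)
  rw [← Nat.card_coe_set_eq, ← Nat.card_congr e, Nat.card_zmod]

lemma ncard_compl_RX [NeZero n] : ((RX n)ᶜ).ncard = n := by
  rw [compl_RX]
  have e : ZMod n ≃ (Set.range (DihedralGroup.sr (n := n))) :=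
    Equiv.ofInjective _ (fun a b h => by injection h)
  rw [← Nat.card_coe_set_eq, ← Nat.card_congr e, Nat.card_zmod]

/-- a permutation normalizing SH preserves or swaps the blocks -/
lemma blocks (hn : 3 ≤ n) {ψ : Equiv.Perm (DihedralGroup n)} (hψ : ψ ∈ Subgroup.normalizer (SH n : Set (Equiv.Perm (DihedralGroup n)))) :
    ψ '' RX n = RX n ∨ ψ '' RX n = (RX n)ᶜ := by
  haveI : NeZero n := ⟨by omega⟩
  have hcard : Nat.card (PS n (ψ '' RX n)) = n := by
    have h1 : PS n (ψ '' RX n) = conjSub ψ (PS n (RX n)) := by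
      show SH n ⊓ fixSub _ =
        Subgroup.map (MulAut.conj ψ).toMonoidHom (SH n ⊓ fixSub (RX n))
      have hinj : Function.Injective ⇑(MulAut.conj ψ).toMonoidHom := (MulAut.conj ψ).injective
      rw [Subgroup.map_inf _ _ _ hinj]
      show _ = conjSub ψ (SH n) ⊓ conjSub ψ (fixSub (RX n))
      rw [conjSub_eq_of_mem_normalizer hψ, conjSub_fixSub]
    rw [h1, conjSub_fixSub_card]
    exact card_PS_RX
  by_cases hX : ∀ x ∈ ψ '' RX n, x ∈ RX n
  · left
    apply Set.eq_of_subset_of_ncard_le hX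
    rw [Set.ncard_image_of_injective _ ψ.injective]

  · right
    push_neg at hX
    obtain ⟨x₀, hx₀T, hx₀⟩ := hX
    obtain ⟨q, rfl⟩ := mem_compl_RX.1 hx₀
    have hsub : ψ '' RX n ⊆ (RX n)ᶜ := by
      intro x hx
      by_contra hxn
      have hxX : x ∈ RX n := not_not.mp hxn
      obtain ⟨p, rfl⟩ := mem_RX.1 hxX
      have := card_PS_mixed hn hx hx₀T
      omega
    apply Set.eq_of_subset_of_ncard_le hsub
    rw [Set.ncard_image_of_injective _ ψ.injective, ncard_compl_RX, ncard_RX]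

/-- the extra symmetries -/
def fp (u : (ZMod n)ˣ) : Equiv.Perm (DihedralGroup n) where
  toFun x := match x with
    | r t => r t
    | sr t => sr (u * t)
  invFun x := match x with
    | r t => r t
    | sr t => sr (↑u⁻¹ * t)
  left_inv := by rintro (t | t) <;> simp [Units.inv_mul_cancel_left]
  right_inv := by rintro (t | t) <;> simp [Units.mul_inv_cancel_left]

@[simp] lemma fp_r (u : (ZMod n)ˣ) (t : ZMod n) : fp u (r t) = r t := rfl
@[simp] lemma fp_sr (u : (ZMod n)ˣ) (t : ZMod n) : fp u (sr t) = sr ((u : ZMod n) * t) := rfl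

lemma fp_mul (u u' : (ZMod n)ˣ) : fp u * fp u' = fp (u * u') := by
  ext x
  rcases x with t | t <;> simp [Equiv.Perm.mul_apply, mul_assoc]

lemma fp_one : (fp 1 : Equiv.Perm (DihedralGroup n)) = 1 := by
  ext x
  rcases x with t | t <;> simp

lemma fp_inv (u : (ZMod n)ˣ) : (fp u)⁻¹ = fp u⁻¹ := by
  rw [inv_eq_iff_mul_eq_one, fp_mul, mul_inv_cancel, fp_one]

lemma sq_inv_eq {u : (ZMod n)ˣ} (hu : u ^ 2 = 1) : u⁻¹ = u := by
  rw [← mul_one u⁻¹, ← hu]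
  group

lemma fp_conj {u : (ZMod n)ˣ} (hu : u ^ 2 = 1) (ε : Bool) (g : (ZMod n)ˣ) (a c : ZMod n) :
    fp u * hp ε g a c * (fp u)⁻¹ =
      hp ε (cond ε (u * g) g) (cond ε (↑u * a) a) (cond ε c (↑u * c)) := by
  rw [fp_inv, sq_inv_eq hu]
  ext x
  have huv : (u : ZMod n) * u = 1 := by
    have : ((u ^ 2 : (ZMod n)ˣ) : ZMod n) = 1 := by rw [hu]; rfl
    rw [← this]; push_cast; ring
  cases ε <;> rcases x with t | t
  · simp [Equiv.Perm.mul_apply, Units.val_mul, mul_add, mul_assoc]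
  · simp [Equiv.Perm.mul_apply, Units.val_mul, mul_add, mul_assoc]
    linear_combination ((g : ZMod n) * t) * huv
  · simp [Equiv.Perm.mul_apply, Units.val_mul, mul_add, mul_assoc]
  · simp [Equiv.Perm.mul_apply, Units.val_mul, mul_add, mul_assoc]
    ring

lemma fp_conj_mem {u : (ZMod n)ˣ} (hu : u ^ 2 = 1) {σ : Equiv.Perm (DihedralGroup n)}
    (hσ : σ ∈ SH n) : fp u * σ * (fp u)⁻¹ ∈ SH n := by
  obtain ⟨ε, g, a, c, rfl⟩ := mem_SH.1 hσ
  rw [fp_conj hu]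
  exact mem_SH.2 ⟨_, _, _, _, rfl⟩

lemma fp_mem_norm {u : (ZMod n)ˣ} (hu : u ^ 2 = 1) : fp u ∈ Subgroup.normalizer (SH n : Set (Equiv.Perm (DihedralGroup n))) := by
  rw [Subgroup.mem_normalizer_iff]
  intro τ
  constructor
  · exact fun h => fp_conj_mem hu h
  · intro h
    have hu' : u⁻¹ ^ 2 = 1 := by rw [sq_inv_eq hu]; exact hu
    have h2 := fp_conj_mem hu' h
    have h3 : fp u⁻¹ * fp u = (1 : Equiv.Perm (DihedralGroup n)) := by
      rw [fp_mul, inv_mul_cancel, fp_one]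
    have key : fp u⁻¹ * (fp u * τ * (fp u)⁻¹) * (fp u⁻¹)⁻¹ = τ := by
      rw [fp_inv u, fp_inv u⁻¹, inv_inv]
      calc fp u⁻¹ * (fp u * τ * fp u⁻¹) * fp u
          = fp u⁻¹ * fp u * τ * (fp u⁻¹ * fp u) := by group
      _ = τ := by rw [h3]; group
    rwa [key] at h2

lemma fp_mem_SH_iff {u : (ZMod n)ˣ} : fp u ∈ SH n ↔ u = 1 := by
  constructor
  · intro h
    obtain ⟨ε, g, a, c, he⟩ := mem_SH.1 h
    have h0 := congrArg (fun σ : Equiv.Perm (DihedralGroup n) => σ (r 0)) he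
    have h1 := congrArg (fun σ : Equiv.Perm (DihedralGroup n) => σ (r 1)) he
    have h2 := congrArg (fun σ : Equiv.Perm (DihedralGroup n) => σ (sr 0)) he
    have h3 := congrArg (fun σ : Equiv.Perm (DihedralGroup n) => σ (sr 1)) he
    cases ε <;> simp [-DihedralGroup.r_zero] at h0 h1 h2 h3
    obtain rfl : a = 0 := by simpa using h0.symm
    obtain rfl : g = 1 := Units.ext (by simpa using h1.symm)
    obtain rfl : c = 0 := by simpa using h2.symm
    exact Units.ext (by simpa using h3)
  · rintro rfl
    rw [fp_one]
    exact (SH n).one_mem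

theorem typeA (hn : 3 ≤ n) {ψ : Equiv.Perm (DihedralGroup n)} (hψ : ψ ∈ Subgroup.normalizer (SH n : Set (Equiv.Perm (DihedralGroup n))))
    (hX : ψ '' RX n = RX n) :
    ∃ (h : Equiv.Perm (DihedralGroup n)) (u : (ZMod n)ˣ),
      h ∈ SH n ∧ u ^ 2 = 1 ∧ ψ = h * fp u := by
  haveI : NeZero n := ⟨by omega⟩
  have hXc : ψ '' (RX n)ᶜ = (RX n)ᶜ := by rw [Set.image_compl_eq ψ.bijective, hX]
  have pA' : ∀ t : ZMod n, ∃ t', ψ (r t) = r t' := by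
    intro t
    have h1 : ψ (r t) ∈ RX n := hX ▸ Set.mem_image_of_mem ψ ⟨t, rfl⟩
    exact mem_RX.1 h1
  choose A pA using pA'
  have pB' : ∀ t : ZMod n, ∃ t', ψ (sr t) = sr t' := by
    intro t
    have h1 : ψ (sr t) ∈ (RX n)ᶜ := hXc ▸ Set.mem_image_of_mem ψ (mem_compl_RX.2 ⟨t, rfl⟩)
    exact mem_compl_RX.1 h1
  choose B pB using pB'
  have hAinj : Function.Injective A := by
    intro t t' h
    have h1 : ψ (r t) = ψ (r t') := by rw [pA, pA, h]
    have := ψ.injective h1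
    injection this
  have hBinj : Function.Injective B := by
    intro t t' h
    have h1 : ψ (sr t) = ψ (sr t') := by rw [pB, pB, h]
    have := ψ.injective h1
    injection this
  -- conjugate of the rotation translation
  obtain ⟨ε₁, g₁, a₁, c₁, hτc⟩ := mem_SH.1
    ((Subgroup.mem_normalizer_iff.1 hψ _).1 (mem_SH.2 ⟨false, 1, 1, 0, rfl⟩))
  have hfix : ∀ m : ZMod n,
      (ψ * hp false 1 1 0 * ψ⁻¹ : Equiv.Perm (DihedralGroup n)) (sr m) = sr m := by
    intro m
    have hm : sr m ∈ (RX n)ᶜ := mem_compl_RX.2 ⟨m, rfl⟩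
    rw [← hXc] at hm
    obtain ⟨x, hx, hxe⟩ := hm
    obtain ⟨q, rfl⟩ := mem_compl_RX.1 hx
    rw [← hxe]
    simp [Equiv.Perm.mul_apply]
  have hτ1 : ε₁ = false ∧ g₁ = 1 ∧ c₁ = 0 := by
    have h0 := hfix 0
    have h1 := hfix 1
    rw [hτc] at h0 h1
    cases ε₁
    · simp at h0 h1
      have hc : c₁ = 0 := by simpa using h0
      subst hc
      exact ⟨rfl, Units.ext (by simpa using h1), rfl⟩
    · simp at h0
  obtain ⟨rfl, rfl, rfl⟩ := hτ1
  have hArec : ∀ t : ZMod n, A (t + 1) = A t + a₁ := by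
    intro t
    have h2 : (ψ * hp false 1 1 0 * ψ⁻¹ : Equiv.Perm (DihedralGroup n)) (ψ (r t))
        = ψ (r (t + 1)) := by
      simp [Equiv.Perm.mul_apply]
    rw [hτc, pA, pA] at h2
    simp at h2
    exact h2.symm
  have hAaff : ∀ t : ZMod n, A t = A 0 + t * a₁ := by
    have hnat : ∀ k : ℕ, A (k : ZMod n) = A 0 + (k : ZMod n) * a₁ := by
      intro k
      induction k with
      | zero => simp
      | succ k ih =>
        push_cast
        rw [hArec (k : ZMod n), ih]
        ring
    intro t
    have := hnat t.val
    rwa [ZMod.natCast_val, ZMod.cast_id] at this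
  have ha₁ : IsUnit a₁ := by
    have hinj : Function.Injective (fun t : ZMod n => t * a₁) := by
      intro t t' h
      apply hAinj
      have h' : t * a₁ = t' * a₁ := h
      rw [hAaff t, hAaff t', h']
    obtain ⟨b, hb⟩ := Finite.surjective_of_injective hinj 1
    exact IsUnit.of_mul_eq_one b (by rw [mul_comm]; exact hb)
  -- conjugate of the reflection translation
  obtain ⟨ε₃, g₃, a₃, c₃, hσc⟩ := mem_SH.1
    ((Subgroup.mem_normalizer_iff.1 hψ _).1 (mem_SH.2 ⟨false, 1, 0, 1, rfl⟩))
  have hfixr : ∀ m : ZMod n,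
      (ψ * hp false 1 0 1 * ψ⁻¹ : Equiv.Perm (DihedralGroup n)) (r m) = r m := by
    intro m
    have hm : r m ∈ RX n := ⟨m, rfl⟩
    rw [← hX] at hm
    obtain ⟨x, hx, hxe⟩ := hm
    obtain ⟨q, rfl⟩ := mem_RX.1 hx
    rw [← hxe]
    simp [Equiv.Perm.mul_apply]
  have hσ1 : ε₃ = false ∧ g₃ = 1 ∧ a₃ = 0 := by
    have h0 := hfixr 0
    have h1 := hfixr 1
    rw [hσc] at h0 h1
    cases ε₃
    · simp [-DihedralGroup.r_zero] at h0 h1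
      have hc : a₃ = 0 := by simpa using h0
      subst hc
      exact ⟨rfl, Units.ext (by simpa using h1), rfl⟩
    · simp [-DihedralGroup.r_zero] at h0
  obtain ⟨rfl, rfl, rfl⟩ := hσ1
  have hBrec : ∀ t : ZMod n, B (t + 1) = B t + c₃ := by
    intro t
    have h2 : (ψ * hp false 1 0 1 * ψ⁻¹ : Equiv.Perm (DihedralGroup n)) (ψ (sr t))
        = ψ (sr (t + 1)) := by
      simp [Equiv.Perm.mul_apply]
    rw [hσc, pB, pB] at h2
    simp at h2
    exact h2.symm
  have hBaff : ∀ t : ZMod n, B t = B 0 + t * c₃ := by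
    have hnat : ∀ k : ℕ, B (k : ZMod n) = B 0 + (k : ZMod n) * c₃ := by
      intro k
      induction k with
      | zero => simp
      | succ k ih =>
        push_cast
        rw [hBrec (k : ZMod n), ih]
        ring
    intro t
    have := hnat t.val
    rwa [ZMod.natCast_val, ZMod.cast_id] at this
  have hc₃ : IsUnit c₃ := by
    have hinj : Function.Injective (fun t : ZMod n => t * c₃) := by
      intro t t' h
      apply hBinj
      have h' : t * c₃ = t' * c₃ := h
      rw [hBaff t, hBaff t', h']
    obtain ⟨b, hb⟩ := Finite.surjective_of_injective hinj 1
    exact IsUnit.of_mul_eq_one b (by rw [mul_comm]; exact hb)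
  -- conjugate of the reflection ρ
  obtain ⟨ε₂, g₂, a₂, c₂, hρc⟩ := mem_SH.1
    ((Subgroup.mem_normalizer_iff.1 hψ _).1 (mem_SH.2 ⟨true, 1, 0, 0, rfl⟩))
  have hρ1 : ∀ t : ZMod n,
      (ψ * hp true 1 0 0 * ψ⁻¹ : Equiv.Perm (DihedralGroup n)) (ψ (r t)) = sr (B t) := by
    intro t
    simp [Equiv.Perm.mul_apply, pB]
  have hρ2 : ∀ t : ZMod n,
      (ψ * hp true 1 0 0 * ψ⁻¹ : Equiv.Perm (DihedralGroup n)) (ψ (sr t)) = r (A t) := by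
    intro t
    simp [Equiv.Perm.mul_apply, pA]
  have hε₂ : ε₂ = true := by
    cases hb : ε₂
    · exfalso
      have := hρ1 0
      rw [hρc, pA, hb] at this
      simp at this
    · rfl
  subst hε₂
  have eq1 : ∀ t : ZMod n, (g₂ : ZMod n) * A t + a₂ = B t := by
    intro t
    have := hρ1 t
    rw [hρc, pA] at this
    simpa using this
  have eq2 : ∀ t : ZMod n, (g₂ : ZMod n) * B t + c₂ = A t := by
    intro t
    have := hρ2 t
    rw [hρc, pB] at this
    simpa using this
  have hga : (g₂ : ZMod n) * a₁ = c₃ := by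
    have e1 := eq1 0
    have e2 := eq1 1
    rw [hAaff 1, hBaff 1, one_mul] at e2
    linear_combination e2 - e1
  have hgc : (g₂ : ZMod n) * c₃ = a₁ := by
    have e1 := eq2 0
    have e2 := eq2 1
    rw [hAaff 1, hBaff 1, one_mul] at e2
    linear_combination e2 - e1
  set uX := ha₁.unit with huX
  set uY := hc₃.unit with huY
  have huXv : (uX : ZMod n) = a₁ := ha₁.unit_spec
  have huYv : (uY : ZMod n) = c₃ := hc₃.unit_spec
  have hg1 : g₂ * uX = uY := Units.ext (by rw [Units.val_mul, huXv, huYv]; exact hga)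
  have hg2 : g₂ * uY = uX := Units.ext (by rw [Units.val_mul, huXv, huYv]; exact hgc)
  have hg₂sq : g₂ ^ 2 = 1 := by
    have : g₂ ^ 2 * uX = uX := by
      rw [pow_two, mul_assoc, hg1, hg2]
    exact mul_right_cancel (b := uX) (by rwa [one_mul])
  refine ⟨hp false uX (A 0) (B 0), g₂, mem_SH.2 ⟨false, uX, A 0, B 0, rfl⟩, hg₂sq, ?_⟩
  ext x
  rcases x with t | t
  · rw [Equiv.Perm.mul_apply, pA, fp_r, hp_false_r, hAaff, huXv]
    congr 1
    ring
  · rw [Equiv.Perm.mul_apply, pB, fp_sr, hp_false_sr, hBaff]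
    congr 1
    rw [← mul_assoc, ← Units.val_mul, mul_comm uX g₂, hg1, huYv]
    ring

theorem relindex_SH (hn : 3 ≤ n) :
    (SH n).relIndex (Subgroup.normalizer (SH n : Set (Equiv.Perm (DihedralGroup n)))) = upsilonCard n := by
  classical
  set NH := Subgroup.normalizer (SH n : Set (Equiv.Perm (DihedralGroup n))) with hNH
  have conj_mem : ∀ (h' : Equiv.Perm (DihedralGroup n)), h' ∈ SH n →
      ∀ (u : (ZMod n)ˣ), u ^ 2 = 1 → (fp u)⁻¹ * (h' * fp u) ∈ SH n := by
    intro h' hh' u hu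
    have hu' : u⁻¹ ^ 2 = 1 := by rw [sq_inv_eq hu]; exact hu
    have h2 := fp_conj_mem hu' hh'
    rw [fp_inv u⁻¹, inv_inv] at h2
    rw [fp_inv u, ← mul_assoc]
    exact h2
  let f : {u : (ZMod n)ˣ // u ^ 2 = 1} → NH ⧸ (SH n).subgroupOf NH :=
    fun u => QuotientGroup.mk ⟨fp u.1, fp_mem_norm u.2⟩
  have finj : Function.Injective f := by
    intro u u' h
    rw [QuotientGroup.eq, Subgroup.mem_subgroupOf] at h
    have h2 : (fp u.1)⁻¹ * fp u'.1 ∈ SH n := h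
    rw [fp_inv, fp_mul] at h2
    have h3 := fp_mem_SH_iff.1 h2
    exact Subtype.ext (inv_mul_eq_one.mp h3)
  have fsurj : Function.Surjective f := by
    intro x
    refine QuotientGroup.induction_on x ?_
    rintro ⟨ψ, hψ⟩
    rcases blocks hn hψ with hX | hXc
    · obtain ⟨h, u, hh, hu, rfl⟩ := typeA hn hψ hX
      refine ⟨⟨u, hu⟩, ?_⟩
      show QuotientGroup.mk _ = QuotientGroup.mk _
      rw [QuotientGroup.eq, Subgroup.mem_subgroupOf]
      exact conj_mem h hh u hu
    · have hρ : (hp true 1 0 0 : Equiv.Perm (DihedralGroup n)) ∈ SH n :=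
        mem_SH.2 ⟨true, 1, 0, 0, rfl⟩
      have hρN : (hp true 1 0 0 : Equiv.Perm (DihedralGroup n)) ∈ NH :=
        Subgroup.le_normalizer hρ
      have hmulN : (hp true 1 0 0 : Equiv.Perm (DihedralGroup n)) * ψ ∈ NH :=
        NH.mul_mem hρN hψ
      have himg : (⇑((hp true 1 0 0 : Equiv.Perm (DihedralGroup n)) * ψ)) '' RX n = RX n := by
        have hcomp : (⇑((hp true 1 0 0 : Equiv.Perm (DihedralGroup n)) * ψ))
            = ⇑(hp true 1 0 0 : Equiv.Perm (DihedralGroup n)) ∘ ⇑ψ := rfl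
        rw [hcomp, Set.image_comp, hXc]
        ext x
        constructor
        · rintro ⟨y, hy, rfl⟩
          obtain ⟨q, rfl⟩ := mem_compl_RX.1 hy
          rw [hp_true_sr]
          exact mem_RX.2 ⟨_, rfl⟩
        · intro hx
          obtain ⟨t, rfl⟩ := mem_RX.1 hx
          refine ⟨sr t, mem_compl_RX.2 ⟨t, rfl⟩, ?_⟩
          rw [hp_true_sr]
          congr 1
          simp
      obtain ⟨h, u, hh, hu, he⟩ := typeA hn hmulN himg
      have hψeq : ψ = ((hp true 1 0 0 : Equiv.Perm (DihedralGroup n))⁻¹ * h) * fp u := by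
        rw [mul_assoc, ← he]
        group
      refine ⟨⟨u, hu⟩, ?_⟩
      show QuotientGroup.mk _ = QuotientGroup.mk _
      rw [QuotientGroup.eq, Subgroup.mem_subgroupOf]
      have h2 : (fp u)⁻¹ * ψ ∈ SH n := by
        rw [hψeq, mul_assoc]
        exact conj_mem _ ((SH n).mul_mem ((SH n).inv_mem hρ) hh) u hu
      exact h2
  exact (Nat.card_eq_of_bijective f ⟨finj, fsurj⟩).symm


end P2

/-- `|ℋ(D_n)| = |T(D_n)| = |Υ_n|`. -/
theorem card_multHol_dihedral (n : ℕ) (hn : 3 ≤ n) :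
    Nat.card (multHolClass (DihedralGroup n)) =
      (holSubgroup (DihedralGroup n)).relIndex
        (Subgroup.normalizer (holSubgroup (DihedralGroup n) : Set (Equiv.Perm (DihedralGroup n)))) ∧
    (holSubgroup (DihedralGroup n)).relIndex
        (Subgroup.normalizer (holSubgroup (DihedralGroup n) : Set (Equiv.Perm (DihedralGroup n)))) =
      upsilonCard n := by
  have hol_eq : holSubgroup (DihedralGroup n) = P2.SH n := by
    apply le_antisymm
    · exact P2.norm_le_SH hn
    · exact P2.SH_le_norm
  constructor
  · exact card_multHolClass_eq (DihedralGroup n)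
  · rw [hol_eq]
    exact P2.relindex_SH hn
end

section
/- Let n = 2m be even with m ≥ 3, let C_n = ⟨σ⟩ be a cyclic group of order n acting on itself by left translation inside Perm(C_n), and let Hol(C_n) = Norm_{Perm(C_n)}(⟨σ⟩). Then Hol(C_n) contains exactly one regular subgroup D isomorphic to the dihedral group D_m = ⟨r, f | r^m = f² = 1, r f = f r^{-1}⟩ whose index-2 cyclic subgroup ⟨r⟩ of order m centralizes σ; moreover, for this D, every element f of D outside ⟨r⟩ satisfies f σ f^{-1} = σ^{-1}. -/
/-- The property of being the distinguished regular dihedral subgroup of `Hol(C_n)`: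
regular, isomorphic to `D_m`, contained in `Norm(⟨σ⟩)`, with an index-2 cyclic
subgroup of order `m` centralizing `σ`. -/
def IsGoodDihedral (m : ℕ) {C : Type*} [Group C] (σ : Equiv.Perm C)
    (D : Subgroup (Equiv.Perm C)) : Prop :=
  D ≤ Subgroup.normalizer (Subgroup.zpowers σ : Set (Equiv.Perm C)) ∧ IsRegularSubgroup D ∧
    Nonempty (D ≃* DihedralGroup m) ∧
    ∃ K : Subgroup (Equiv.Perm C), K ≤ D ∧ IsCyclic K ∧ Nat.card K = m ∧
      K.relIndex D = 2 ∧ ∀ ρ ∈ K, ρ * σ = σ * ρ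

set_option linter.unusedSectionVars false
set_option maxHeartbeats 1000000
open Subgroup Equiv

section DHAux

section DH
variable {C : Type*} [Group C] [Fintype C]

lemma dh_comm (c : C) (hgen : Subgroup.zpowers c = ⊤) (x y : C) : x * y = y * x := by
  obtain ⟨a, rfl⟩ : x ∈ zpowers c := hgen ▸ Subgroup.mem_top x
  obtain ⟨b, rfl⟩ : y ∈ zpowers c := hgen ▸ Subgroup.mem_top y
  rw [← zpow_add, ← zpow_add, add_comm]

lemma dh_exists_zpow (c : C) (hgen : Subgroup.zpowers c = ⊤) (x : C) : ∃ k : ℤ, x = c ^ k := by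
  obtain ⟨a, ha⟩ : x ∈ zpowers c := hgen ▸ Subgroup.mem_top x
  exact ⟨a, ha.symm⟩

lemma dh_sigma_apply (c : C) (σ : Equiv.Perm C) (hσ : σ = MulAction.toPermHom C C c)
    (k : ℤ) (x : C) : (σ ^ k) x = c ^ k * x := by
  subst hσ; rw [← map_zpow]; rfl

lemma dh_orderOf_c (m : ℕ) (c : C) (hcard : Fintype.card C = 2 * m)
    (hgen : Subgroup.zpowers c = ⊤) : orderOf c = 2 * m := by
  rw [← hcard, ← Nat.card_eq_fintype_card]
  exact orderOf_eq_card_of_forall_mem_zpowers (fun x => hgen ▸ Subgroup.mem_top x)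

lemma dh_orderOf_sigma (m : ℕ) (c : C) (hcard : Fintype.card C = 2 * m)
    (hgen : Subgroup.zpowers c = ⊤) (σ : Equiv.Perm C)
    (hσ : σ = MulAction.toPermHom C C c) : orderOf σ = 2 * m := by
  subst hσ
  rw [orderOf_injective (MulAction.toPermHom C C) MulAction.toPerm_injective c]
  exact dh_orderOf_c m c hcard hgen

lemma dh_c_eq_one (m : ℕ) (c : C) (hcard : Fintype.card C = 2 * m)
    (hgen : Subgroup.zpowers c = ⊤) (e : ℤ) : c ^ e = 1 ↔ (2 * m : ℤ) ∣ e := by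
  rw [← orderOf_dvd_iff_zpow_eq_one, dh_orderOf_c m c hcard hgen]; push_cast; rfl

lemma dh_c_odd (m : ℕ) (c : C) (hcard : Fintype.card C = 2 * m)
    (hgen : Subgroup.zpowers c = ⊤) (e : ℤ) (he : Odd e) : c ^ e ≠ 1 := by
  intro h1
  rw [dh_c_eq_one m c hcard hgen] at h1
  rcases h1 with ⟨t, ht⟩
  have he2 : Even e := ⟨(m : ℤ) * t, by rw [ht]; ring⟩
  exact (Int.not_odd_iff_even.mpr he2) he

lemma dh_card_regular (D : Subgroup (Equiv.Perm C)) (h : IsRegularSubgroup D) :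
    Nat.card D = Fintype.card C := by
  rw [← Nat.card_eq_fintype_card]
  apply Nat.card_eq_of_bijective (fun d : D => (d : Equiv.Perm C) 1)
  constructor
  · intro d₁ d₂ hd
    have hmem : ((d₁ : Equiv.Perm C)⁻¹ * d₂ : Equiv.Perm C) ∈ D :=
      mul_mem (inv_mem d₁.2) d₂.2
    by_contra hne
    have hne' : ((d₁ : Equiv.Perm C)⁻¹ * (d₂ : Equiv.Perm C)) ≠ 1 := by
      intro h1
      exact hne (Subtype.ext (by rwa [inv_mul_eq_one] at h1))
    exact h.2 _ hmem hne' 1 (by simp [Equiv.Perm.mul_apply, ← hd])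
  · intro z
    obtain ⟨τ, hτ, hτz⟩ := h.1 1 z
    exact ⟨⟨τ, hτ⟩, hτz⟩

lemma dh_centralizer (c : C) (hgen : Subgroup.zpowers c = ⊤) (σ : Equiv.Perm C)
    (hσ : σ = MulAction.toPermHom C C c) (τ : Equiv.Perm C) (hτ : τ * σ = σ * τ) :
    ∃ t : ℤ, τ = σ ^ t := by
  obtain ⟨t, ht⟩ := dh_exists_zpow c hgen (τ 1)
  refine ⟨t, Equiv.ext fun x => ?_⟩
  obtain ⟨s, rfl⟩ := dh_exists_zpow c hgen x
  have hcomm : τ * σ ^ s = σ ^ s * τ := (Commute.zpow_right hτ s).eq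
  calc τ (c ^ s) = τ ((σ ^ s) 1) := by rw [dh_sigma_apply c σ hσ, mul_one]
    _ = (τ * σ ^ s) 1 := rfl
    _ = (σ ^ s * τ) 1 := by rw [hcomm]
    _ = c ^ s * τ 1 := by rw [Equiv.Perm.mul_apply, dh_sigma_apply c σ hσ]
    _ = (σ ^ t) (c ^ s) := by
        rw [dh_sigma_apply c σ hσ, ht, dh_comm c hgen]

end DH


lemma dh_conj_zpow {G : Type*} [Group G] (g x : G) (t : ℤ) :
    g * x ^ t * g⁻¹ = (g * x * g⁻¹) ^ t := by
  simpa using (map_zpow (MulAut.conj g) x t).symm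

lemma dh_inv_conj {G : Type*} [Group G] (g σ : G) (h : g * σ * g⁻¹ = σ⁻¹) :
    g⁻¹ * σ * g = σ⁻¹ := by
  have hσ2 : σ = g * σ⁻¹ * g⁻¹ := by
    conv_lhs => rw [← inv_inv σ, ← h]
    group
  calc g⁻¹ * σ * g = g⁻¹ * (g * σ⁻¹ * g⁻¹) * g := by rw [← hσ2]
    _ = σ⁻¹ := by group

section DH
variable {C : Type*} [Group C] [Fintype C]

lemma dh_rho_order (m : ℕ) (hm : 3 ≤ m) (c : C) (hcard : Fintype.card C = 2 * m)
    (hgen : Subgroup.zpowers c = ⊤) (σ : Equiv.Perm C)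
    (hσ : σ = MulAction.toPermHom C C c) : orderOf (σ ^ 2) = m := by
  rw [orderOf_pow, dh_orderOf_sigma m c hcard hgen σ hσ]
  rw [Nat.gcd_comm, Nat.gcd_eq_left (Dvd.intro m rfl)]
  omega

lemma dh_K_eq (m : ℕ) (hm : 3 ≤ m) (c : C) (hcard : Fintype.card C = 2 * m)
    (hgen : Subgroup.zpowers c = ⊤) (σ : Equiv.Perm C)
    (hσ : σ = MulAction.toPermHom C C c) (K : Subgroup (Equiv.Perm C))
    (hKcard : Nat.card K = m) (hKcomm : ∀ ρ ∈ K, ρ * σ = σ * ρ) :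
    K = Subgroup.zpowers (σ ^ 2) := by
  have hle : K ≤ Subgroup.zpowers (σ ^ 2) := by
    intro τ hτ
    obtain ⟨t, rfl⟩ := dh_centralizer c hgen σ hσ τ (hKcomm τ hτ)
    have h1 : ((⟨σ ^ t, hτ⟩ : K) : Equiv.Perm C) ^ (Nat.card K) = 1 := by
      rw [← Subgroup.coe_pow, pow_card_eq_one']
      rfl
    rw [hKcard] at h1
    have h2 : σ ^ (t * m) = 1 := by
      rw [zpow_mul, zpow_natCast]
      exact h1
    rw [← orderOf_dvd_iff_zpow_eq_one, dh_orderOf_sigma m c hcard hgen σ hσ] at h2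
    obtain ⟨q, hq⟩ : (2 : ℤ) ∣ t := by
      rcases h2 with ⟨u, hu⟩
      push_cast at hu
      have hm0 : (m : ℤ) ≠ 0 := by positivity
      exact ⟨u, mul_right_cancel₀ hm0 (by linarith [hu] : t * (m : ℤ) = (2 * u) * m)⟩
    rw [Subgroup.mem_zpowers_iff]
    refine ⟨q, ?_⟩
    rw [← zpow_natCast σ 2, ← zpow_mul, hq]
    norm_num
  exact (Subgroup.eq_of_le_of_card_ge hle (by
    rw [hKcard, Nat.card_zpowers, dh_rho_order m hm c hcard hgen σ hσ]))

lemma dh_norm_mem (σ g : Equiv.Perm C)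
    (hg : g * σ * g⁻¹ = σ ∨ g * σ * g⁻¹ = σ⁻¹) :
    g ∈ Subgroup.normalizer (Subgroup.zpowers σ : Set (Equiv.Perm C)) := by
  have hg' : g⁻¹ * σ * g = σ ∨ g⁻¹ * σ * g = σ⁻¹ := by
    rcases hg with h | h
    · left
      have : σ = g * σ * g⁻¹ := h.symm
      calc g⁻¹ * σ * g = g⁻¹ * (g * σ * g⁻¹) * g := by rw [← this]
        _ = σ := by group
    · exact Or.inr (dh_inv_conj g σ h)
  rw [Subgroup.mem_normalizer_iff]
  intro h
  rw [Subgroup.mem_zpowers_iff, Subgroup.mem_zpowers_iff]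
  constructor
  · rintro ⟨t, rfl⟩
    rw [dh_conj_zpow]
    rcases hg with h1 | h1 <;> rw [h1]
    · exact ⟨t, rfl⟩
    · exact ⟨-t, by rw [zpow_neg, inv_zpow]⟩
  · rintro ⟨t, ht⟩
    have : h = g⁻¹ * σ ^ t * g := by rw [ht]; group
    rw [this, show g⁻¹ * σ ^ t * g = g⁻¹ * σ ^ t * g⁻¹⁻¹ by rw [inv_inv], dh_conj_zpow]
    rw [inv_inv]
    rcases hg' with h1 | h1 <;> rw [h1]
    · exact ⟨t, rfl⟩
    · exact ⟨-t, by rw [zpow_neg, inv_zpow]⟩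

end DH


def dhRot (m : ℕ) : Subgroup (DihedralGroup m) where
  carrier := Set.range DihedralGroup.r
  one_mem' := ⟨0, DihedralGroup.one_def.symm⟩
  mul_mem' := by rintro a b ⟨i, rfl⟩ ⟨j, rfl⟩; exact ⟨i + j, (DihedralGroup.r_mul_r i j).symm⟩
  inv_mem' := by
    rintro a ⟨i, rfl⟩
    refine ⟨-i, ?_⟩
    apply eq_inv_of_mul_eq_one_left
    rw [DihedralGroup.r_mul_r, neg_add_cancel, DihedralGroup.one_def]

lemma dh_rot_card (m : ℕ) [NeZero m] : Nat.card (dhRot m) = m := by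
  have h1 : Nat.card (Set.range (DihedralGroup.r : ZMod m → DihedralGroup m)) = Nat.card (ZMod m) :=
    Nat.card_range_of_injective (fun a b h => by injection h)
  have h2 : Nat.card (ZMod m) = m := Nat.card_zmod m
  exact h1.trans h2

lemma dh_zpowers_eq_rot (m : ℕ) (hm : 3 ≤ m) (y : DihedralGroup m)
    (hy : orderOf y = m) : Subgroup.zpowers y = dhRot m := by
  haveI : NeZero m := ⟨by omega⟩
  cases y with
  | r j =>
    apply Subgroup.eq_of_le_of_card_ge
      (Subgroup.zpowers_le.mpr (show DihedralGroup.r j ∈ dhRot m from ⟨j, rfl⟩))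
    rw [dh_rot_card, Nat.card_zpowers, hy]
  | sr j =>
    rw [DihedralGroup.orderOf_sr] at hy
    omega

section DH
variable {C : Type*} [Group C] [Fintype C]

lemma dh_zp2 (σ : Equiv.Perm C) (k : ℤ) : (σ ^ 2) ^ k = σ ^ (2 * k) := by
  rw [← zpow_natCast σ 2, ← zpow_mul]
  norm_num

lemma dh_coset (D K : Subgroup (Equiv.Perm C)) (hKD : K ≤ D) (hrel : K.relIndex D = 2)
    (f τ : Equiv.Perm C) (hfD : f ∈ D) (hfK : f ∉ K) (hτD : τ ∈ D) (hτK : τ ∉ K) :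
    f⁻¹ * τ ∈ K := by
  have h2 : (K.subgroupOf D).index = 2 := hrel
  have hmem : (⟨f, hfD⟩ : D)⁻¹ * ⟨τ, hτD⟩ ∈ K.subgroupOf D := by
    apply (Subgroup.mul_mem_iff_of_index_two h2 (a := (⟨f, hfD⟩ : D)⁻¹) (b := ⟨τ, hτD⟩)).2
    rw [inv_mem_iff, Subgroup.mem_subgroupOf, Subgroup.mem_subgroupOf]
    simp only [hfK, hτK]
  rwa [Subgroup.mem_subgroupOf] at hmem

lemma dh_conj (m : ℕ) (hm : 3 ≤ m) (c : C) (hcard : Fintype.card C = 2 * m)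
    (hgen : Subgroup.zpowers c = ⊤) (σ : Equiv.Perm C)
    (hσ : σ = MulAction.toPermHom C C c) :
    ∀ D : Subgroup (Equiv.Perm C), IsGoodDihedral m σ D →
      ∀ K : Subgroup (Equiv.Perm C),
        (K ≤ D ∧ IsCyclic K ∧ Nat.card K = m ∧ K.relIndex D = 2 ∧
          ∀ ρ ∈ K, ρ * σ = σ * ρ) →
        ∀ f ∈ D, f ∉ K → f * σ * f⁻¹ = σ⁻¹ := by
  rintro D ⟨hnorm, hreg, ⟨e⟩, -⟩ K ⟨hKD, -, hKcard, hKrel, hKcomm⟩ f hfD hfK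
  have hKeq : K = Subgroup.zpowers (σ ^ 2) := dh_K_eq m hm c hcard hgen σ hσ K hKcard hKcomm
  have hρK : σ ^ 2 ∈ K := by rw [hKeq]; exact Subgroup.mem_zpowers _
  have hρD : σ ^ 2 ∈ D := hKD hρK
  have hyord : orderOf (e ⟨σ ^ 2, hρD⟩) = m := by
    rw [MulEquiv.orderOf_eq, Subgroup.orderOf_mk]
    exact dh_rho_order m hm c hcard hgen σ hσ
  -- e ⟨f⟩ is not a rotation
  have hxrot : e ⟨f, hfD⟩ ∉ dhRot m := by
    intro hmem
    rw [← dh_zpowers_eq_rot m hm _ hyord, Subgroup.mem_zpowers_iff] at hmem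
    obtain ⟨k, hk⟩ := hmem
    rw [← map_zpow] at hk
    have h2 := e.injective hk
    apply hfK
    rw [hKeq, Subgroup.mem_zpowers_iff]
    exact ⟨k, by simpa [SubgroupClass.coe_zpow] using Subtype.ext_iff.mp h2⟩
  obtain ⟨i, hxi⟩ : ∃ i, e ⟨f, hfD⟩ = DihedralGroup.sr i := by
    rcases hE : e ⟨f, hfD⟩ with t | t
    · exact absurd (by rw [hE]; exact ⟨t, rfl⟩ : e ⟨f, hfD⟩ ∈ dhRot m) hxrot
    · exact ⟨t, rfl⟩
  obtain ⟨j, hyj⟩ : ∃ j, e ⟨σ ^ 2, hρD⟩ = DihedralGroup.r j := by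
    rcases hE : e ⟨σ ^ 2, hρD⟩ with t | t
    · exact ⟨t, rfl⟩
    · rw [hE, DihedralGroup.orderOf_sr] at hyord; omega
  -- f * f = 1
  have hff : f * f = 1 := by
    have h1 : e (⟨f, hfD⟩ * ⟨f, hfD⟩) = e 1 := by
      rw [map_mul, map_one, hxi, DihedralGroup.sr_mul_self]
    exact congrArg Subtype.val (e.injective h1)
  -- f * σ² * f⁻¹ = (σ²)⁻¹
  have hconj2 : f * σ ^ 2 * f⁻¹ = (σ ^ 2)⁻¹ := by
    have hxinv : (e ⟨f, hfD⟩)⁻¹ = e ⟨f, hfD⟩ := by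
      rw [hxi]
      exact inv_eq_of_mul_eq_one_right (DihedralGroup.sr_mul_self i)
    have hyinv : (DihedralGroup.r j)⁻¹ = DihedralGroup.r (-j) := by
      apply (eq_inv_of_mul_eq_one_left ?_).symm
      rw [DihedralGroup.r_mul_r, neg_add_cancel, DihedralGroup.one_def]
    have hrel : e ⟨f, hfD⟩ * e ⟨σ ^ 2, hρD⟩ * (e ⟨f, hfD⟩)⁻¹ = (e ⟨σ ^ 2, hρD⟩)⁻¹ := by
      rw [hxinv, hxi, hyj, hyinv, DihedralGroup.sr_mul_r, DihedralGroup.sr_mul_sr]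
      congr 1
      ring
    have h1 : e (⟨f, hfD⟩ * ⟨σ ^ 2, hρD⟩ * ⟨f, hfD⟩⁻¹) = e (⟨σ ^ 2, hρD⟩⁻¹) := by
      rw [map_mul, map_mul, map_inv, map_inv]
      exact hrel
    exact congrArg Subtype.val (e.injective h1)
  -- f σ f⁻¹ = σ ^ j₀
  obtain ⟨j₀, hj₀⟩ : ∃ t : ℤ, σ ^ t = f * σ * f⁻¹ := by
    rw [← Subgroup.mem_zpowers_iff]
    exact ((Subgroup.mem_normalizer_iff.mp (hnorm hfD)) σ).mp (Subgroup.mem_zpowers σ)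
  have horder : orderOf σ = 2 * m := dh_orderOf_sigma m c hcard hgen σ hσ
  have h1 : (σ ^ j₀) ^ 2 = (σ ^ 2)⁻¹ := by
    rw [hj₀, ← hconj2, sq, sq]
    group
  have hmod : σ ^ (j₀ * 2) = σ ^ (-2 : ℤ) := by
    calc σ ^ (j₀ * 2) = (σ ^ j₀) ^ (2 : ℤ) := zpow_mul σ j₀ 2
      _ = (σ ^ j₀) ^ (2 : ℕ) := by norm_cast
      _ = (σ ^ 2)⁻¹ := h1
      _ = (σ ^ ((2 : ℕ) : ℤ))⁻¹ := by rw [zpow_natCast]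
      _ = σ ^ (-2 : ℤ) := by rw [← zpow_neg]; norm_cast
  have hdvd : ((2 * m : ℕ) : ℤ) ∣ -2 - j₀ * 2 := by
    have := (zpow_eq_zpow_iff_modEq.mp hmod)
    rw [horder] at this
    exact Int.ModEq.dvd this
  obtain ⟨q, hq⟩ : ∃ q : ℤ, j₀ + 1 = (m : ℤ) * q := by
    obtain ⟨v, hv⟩ := hdvd
    refine ⟨-v, by push_cast at hv; linarith⟩
  rcases Int.even_or_odd q with hqe | hqo
  · -- q even : j₀ ≡ -1 mod 2m, done
    obtain ⟨u, hu⟩ := hqe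
    rw [← hj₀]
    have hj : j₀ = -1 + 2 * (m : ℤ) * u := by rw [hu] at hq; linear_combination hq
    have : σ ^ j₀ = σ ^ (-1 : ℤ) := by
      rw [zpow_eq_zpow_iff_modEq, horder, Int.modEq_iff_dvd]
      exact ⟨-u, by rw [hj]; push_cast; ring⟩
    rw [this, zpow_neg_one]
  · -- q odd : contradiction
    exfalso
    have hfs : ∀ s : ℤ, f * σ ^ s = σ ^ (j₀ * s) * f := by
      intro s
      have h2 : f * σ ^ s * f⁻¹ = (f * σ * f⁻¹) ^ s := dh_conj_zpow f σ s
      rw [← hj₀, ← zpow_mul] at h2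
      rw [← h2]
      group
    obtain ⟨a, hab⟩ := dh_exists_zpow c hgen (f 1)
    -- f (f 1) = 1 gives c ^ (a * (j₀ + 1)) = 1
    have hkey : c ^ (j₀ * a + a) = 1 := by
      have h3 : f (f 1) = 1 := by
        rw [← Equiv.Perm.mul_apply, hff]; rfl
      have h4 : f (c ^ a) = c ^ (j₀ * a) * c ^ a := by
        conv_lhs => rw [show (c : C) ^ a = (σ ^ a) 1 by
            rw [dh_sigma_apply c σ hσ, mul_one], ← Equiv.Perm.mul_apply, hfs a,
          Equiv.Perm.mul_apply, dh_sigma_apply c σ hσ]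
        rw [hab]
      rw [zpow_add, ← h4, ← hab]
      exact h3
    rw [dh_c_eq_one m c hcard hgen] at hkey
    -- hence a even
    obtain ⟨w, hw⟩ : (2 : ℤ) ∣ a := by
      obtain ⟨u, hu⟩ := hkey
      have hmz : (m : ℤ) ≠ 0 := by positivity
      -- j₀ * a + a = a * (j₀ + 1) = a * m * q = 2 m u  =>  a * q = 2 u
      have h5 : a * q = 2 * u := by
        have h6 : a * ((m:ℤ) * q) = 2 * (m:ℤ) * u := by rw [← hq]; push_cast at hu; linarith
        apply mul_left_cancel₀ hmz
        ring_nf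
        ring_nf at h6
        linarith
      rcases Int.even_or_odd a with ⟨w, hw⟩ | hodd
      · exact ⟨w, by omega⟩
      · exfalso
        have h8 : Odd (a * q) := hodd.mul hqo
        rw [h5] at h8
        rcases h8 with ⟨v, hv⟩
        omega
    -- now show D cannot be transitive
    obtain ⟨τ, hτD, hτ1⟩ := hreg.1 1 c
    by_cases hτK : τ ∈ K
    · rw [hKeq, Subgroup.mem_zpowers_iff] at hτK
      obtain ⟨k, hk⟩ := hτK
      rw [← hk, dh_zp2, dh_sigma_apply c σ hσ, mul_one] at hτ1
      have : c ^ (2 * k - 1) = 1 := by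
        rw [zpow_sub, hτ1]
        simp
      exact dh_c_odd m c hcard hgen _ ⟨k - 1, by ring⟩ this
    · have hco : f⁻¹ * τ ∈ K := dh_coset D K hKD hKrel f τ hfD hfK hτD hτK
      rw [hKeq, Subgroup.mem_zpowers_iff] at hco
      obtain ⟨k, hk⟩ := hco
      have hτ : τ = f * σ ^ (2 * k) := by
        rw [← dh_zp2, hk]
        group
      rw [hτ, Equiv.Perm.mul_apply, dh_sigma_apply c σ hσ, mul_one] at hτ1
      have h7 : f ((σ ^ (2 * k)) 1) = c ^ (j₀ * (2 * k)) * f 1 := by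
        rw [← Equiv.Perm.mul_apply, hfs, Equiv.Perm.mul_apply, dh_sigma_apply c σ hσ]
      rw [dh_sigma_apply c σ hσ, mul_one] at h7
      rw [h7, hab, hw] at hτ1
      have : c ^ (j₀ * (2 * k) + 2 * w - 1) = 1 := by
        rw [zpow_sub, zpow_add, hτ1]
        simp
      exact dh_c_odd m c hcard hgen _ ⟨j₀ * k + w - 1, by ring⟩ this

end DH


def dhF0 {C : Type*} [Group C] (c : C) : Equiv.Perm C where
  toFun x := c * x⁻¹
  invFun x := (c⁻¹ * x)⁻¹
  left_inv x := by simp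
  right_inv x := by simp

lemma dhF0_apply {C : Type*} [Group C] (c x : C) : dhF0 c x = c * x⁻¹ := rfl

section DH
variable {C : Type*} [Group C] [Fintype C]

lemma dh_exists_unique (m : ℕ) (hm : 3 ≤ m) (c : C) (hcard : Fintype.card C = 2 * m)
    (hgen : Subgroup.zpowers c = ⊤) (σ : Equiv.Perm C)
    (hσ : σ = MulAction.toPermHom C C c) :
    ∃! D : Subgroup (Equiv.Perm C), IsGoodDihedral m σ D := by
  haveI : NeZero m := ⟨by omega⟩
  have hcomm := dh_comm c hgen
  have horder : orderOf σ = 2 * m := dh_orderOf_sigma m c hcard hgen σ hσ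
  have hρord : orderOf (σ ^ 2) = m := dh_rho_order m hm c hcard hgen σ hσ
  -- basic facts about f0
  have hf0sq : dhF0 c * dhF0 c = 1 := by
    ext x
    simp only [Equiv.Perm.mul_apply, Equiv.Perm.one_apply, dhF0_apply]
    rw [mul_inv_rev, inv_inv, hcomm x c⁻¹, mul_inv_cancel_left]
  have hf0inv : (dhF0 c)⁻¹ = dhF0 c := inv_eq_of_mul_eq_one_right hf0sq
  have hswap : ∀ s : ℤ, σ ^ s * dhF0 c = dhF0 c * σ ^ (-s) := by
    intro s
    ext x
    simp only [Equiv.Perm.mul_apply, dhF0_apply]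
    rw [dh_sigma_apply c σ hσ, dh_sigma_apply c σ hσ, mul_inv_rev, zpow_neg, inv_inv]
    rw [hcomm x⁻¹ (c ^ s), ← mul_assoc, ← mul_assoc, hcomm (c ^ s) c]
  have hρswap : ∀ s : ℤ, (σ ^ 2) ^ s * dhF0 c = dhF0 c * (σ ^ 2) ^ (-s) := by
    intro s
    rw [dh_zp2, dh_zp2, hswap, mul_neg]
  have hf0conj : dhF0 c * σ * (dhF0 c)⁻¹ = σ⁻¹ := by
    have h1 := hswap (-1)
    simp only [zpow_neg_one, neg_neg, zpow_one] at h1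
    rw [hf0inv, ← h1, mul_assoc, hf0sq, mul_one]
  have hcommσ : ∀ t : ℤ, (σ ^ 2) ^ t * σ = σ * (σ ^ 2) ^ t :=
    fun t => (((Commute.refl σ).pow_left 2).zpow_left t).eq
  -- Φ
  set Φ : ZMod m → Equiv.Perm C := fun i => (σ ^ 2) ^ (i.val : ℤ) with hΦ
  have hΦcast : ∀ k : ℤ, Φ (k : ZMod m) = (σ ^ 2) ^ k := by
    intro k
    show (σ ^ 2) ^ _ = (σ ^ 2) ^ k
    rw [zpow_eq_zpow_iff_modEq, hρord, ZMod.val_intCast]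
    exact Int.emod_emod_of_dvd k dvd_rfl
  have hcastval : ∀ i : ZMod m, ((i.val : ℤ) : ZMod m) = i := by
    intro i
    rw [Int.cast_natCast, ZMod.natCast_val, ZMod.cast_id]
  have hΦadd : ∀ i j : ZMod m, Φ (i + j) = Φ i * Φ j := by
    intro i j
    have h1 : i + j = (((i.val : ℤ) + (j.val : ℤ) : ℤ) : ZMod m) := by
      rw [Int.cast_add, hcastval, hcastval]
    rw [h1, hΦcast, zpow_add]
  have hswapΦ : ∀ i : ZMod m, Φ i * dhF0 c = dhF0 c * Φ (-i) := by
    intro i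
    have h1 : (-i : ZMod m) = ((-(i.val : ℤ) : ℤ) : ZMod m) := by
      rw [Int.cast_neg, hcastval]
    rw [h1, hΦcast]
    exact hρswap (i.val : ℤ)
  -- ψ
  set ψfun : DihedralGroup m → Equiv.Perm C := fun g => match g with
    | DihedralGroup.r i => Φ i
    | DihedralGroup.sr i => dhF0 c * Φ i with hψfun
  have hmul : ∀ a b : DihedralGroup m, ψfun (a * b) = ψfun a * ψfun b := by
    rintro (i | i) (j | j)
    · rw [DihedralGroup.r_mul_r]
      show Φ (i + j) = Φ i * Φ j
      exact hΦadd i j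
    · rw [DihedralGroup.r_mul_sr]
      show dhF0 c * Φ (j - i) = Φ i * (dhF0 c * Φ j)
      rw [← mul_assoc, hswapΦ i, mul_assoc, ← hΦadd, sub_eq_neg_add]
    · rw [DihedralGroup.sr_mul_r]
      show dhF0 c * Φ (i + j) = (dhF0 c * Φ i) * Φ j
      rw [hΦadd, mul_assoc]
    · rw [DihedralGroup.sr_mul_sr]
      show Φ (j - i) = (dhF0 c * Φ i) * (dhF0 c * Φ j)
      rw [mul_assoc, ← mul_assoc (Φ i), hswapΦ i, ← mul_assoc, ← mul_assoc, hf0sq, one_mul,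
        ← hΦadd, sub_eq_neg_add]
  set ψ : DihedralGroup m →* Equiv.Perm C := MonoidHom.mk' ψfun hmul with hψ
  have hψr : ∀ k : ℤ, ψ (DihedralGroup.r (k : ZMod m)) = (σ ^ 2) ^ k := fun k => hΦcast k
  have hψsr : ∀ k : ℤ, ψ (DihedralGroup.sr (k : ZMod m)) = dhF0 c * (σ ^ 2) ^ k := by
    intro k
    show dhF0 c * Φ (k : ZMod m) = _
    rw [hΦcast]
  have hmem1 : ∀ k : ℤ, (σ ^ 2) ^ k ∈ ψ.range := fun k => ⟨DihedralGroup.r (k : ZMod m), hψr k⟩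
  have hmem2 : ∀ k : ℤ, dhF0 c * (σ ^ 2) ^ k ∈ ψ.range :=
    fun k => ⟨DihedralGroup.sr (k : ZMod m), hψsr k⟩
  -- apply formulas
  have happly1 : ∀ (t : ℤ) (x : C), ((σ ^ 2) ^ t) x = c ^ (2 * t) * x := by
    intro t x
    rw [dh_zp2, dh_sigma_apply c σ hσ]
  have happly2 : ∀ t v : ℤ, (dhF0 c * (σ ^ 2) ^ t) (c ^ v) = c ^ (1 - 2 * t - v) := by
    intro t v
    rw [Equiv.Perm.mul_apply, happly1, dhF0_apply, ← zpow_add]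
    calc (c : C) * (c ^ (2 * t + v))⁻¹ = c ^ (1 : ℤ) * c ^ (-(2 * t + v)) := by
          rw [zpow_one, zpow_neg]
      _ = c ^ (1 - 2 * t - v) := by rw [← zpow_add]; congr 1; ring
  have hdv : ∀ a b : ℤ, c ^ a = c ^ b → (2 * (m : ℤ)) ∣ b - a := by
    intro a b h
    have h2 := zpow_eq_zpow_iff_modEq.mp h
    rw [dh_orderOf_c m c hcard hgen] at h2
    have h3 := h2.dvd
    push_cast at h3
    exact h3
  -- injectivity of ψ
  have hinj : Function.Injective ψ := by
    rw [injective_iff_map_eq_one]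
    rintro (i | i) h
    · have h1 : (σ ^ 2) ^ (i.val : ℤ) = 1 := h
      rw [← orderOf_dvd_iff_zpow_eq_one, hρord] at h1
      have h3 : i.val < m := ZMod.val_lt i
      have h4 : i.val = 0 := by
        rcases h1 with ⟨u, hu⟩
        have h5 : ((i.val : ℤ)) < m := by exact_mod_cast h3
        have h6 : (0 : ℤ) ≤ (i.val : ℤ) := Int.natCast_nonneg i.val
        have h7 : (0 : ℤ) < m := by positivity
        rcases Int.lt_or_le u 1 with h8 | h8
        · nlinarith
        · nlinarith
      rw [DihedralGroup.one_def]
      congr 1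
      rw [← hcastval i, h4]
      norm_num
    · exfalso
      have hone : dhF0 c * (σ ^ 2) ^ ((i.val : ℤ)) = 1 := h
      have ee : ∀ v : ℤ, c ^ (1 - 2 * (i.val : ℤ) - v) = c ^ v := by
        intro v
        calc c ^ (1 - 2 * (i.val : ℤ) - v)
            = (dhF0 c * (σ ^ 2) ^ ((i.val : ℤ))) (c ^ v) := (happly2 _ v).symm
          _ = (1 : Equiv.Perm C) (c ^ v) := by rw [hone]
          _ = c ^ v := rfl
      have d1 := hdv _ _ (ee 0)
      have d2 := hdv _ _ (ee 1)
      have d3 : (2 * (m : ℤ)) ∣ 2 := by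
        have := Int.dvd_sub d2 d1
        have h9 : (1 : ℤ) - (1 - 2 * (i.val : ℤ) - 1) - (0 - (1 - 2 * (i.val : ℤ) - 0)) = 2 := by
          ring
        rwa [h9] at this
      have := Int.le_of_dvd (by norm_num) d3
      have hm3 : (3 : ℤ) ≤ m := by exact_mod_cast hm
      linarith
  -- the subgroup D
  have hregD : IsRegularSubgroup ψ.range := by
    constructor
    · -- transitive
      intro z w
      obtain ⟨sz, rfl⟩ := dh_exists_zpow c hgen z
      obtain ⟨tz, rfl⟩ := dh_exists_zpow c hgen w
      rcases Int.even_or_odd (tz - sz) with ⟨k, hk⟩ | ⟨k, hk⟩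
      · refine ⟨(σ ^ 2) ^ k, hmem1 k, ?_⟩
        rw [happly1, ← zpow_add]
        congr 1
        omega
      · refine ⟨dhF0 c * (σ ^ 2) ^ (-(sz + k)), hmem2 _, ?_⟩
        rw [happly2]
        congr 1
        omega
    · -- free
      intro τ hτ hτ1 z hz
      obtain ⟨g, hg⟩ := hτ
      obtain ⟨v, rfl⟩ := dh_exists_zpow c hgen z
      rcases g with i | i
      · have hform : τ = (σ ^ 2) ^ ((i.val : ℤ)) := hg.symm
        rw [hform, happly1] at hz
        have h2 : c ^ (2 * (i.val : ℤ)) = 1 := by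
          have := mul_right_cancel (b := c ^ v) (a := c ^ (2 * (i.val : ℤ))) (c := 1)
          apply this
          rw [hz, one_mul]
        apply hτ1
        rw [hform]
        ext x
        obtain ⟨u, rfl⟩ := dh_exists_zpow c hgen x
        rw [happly1, h2, one_mul]
        rfl
      · have hform : τ = dhF0 c * (σ ^ 2) ^ ((i.val : ℤ)) := hg.symm
        rw [hform, happly2] at hz
        have d1 := hdv _ _ hz
        obtain ⟨u, hu⟩ := d1
        have hev : Even (v - (1 - 2 * (i.val : ℤ) - v)) := ⟨(m : ℤ) * u, by linarith⟩
        exact (Int.not_odd_iff_even.mpr hev) ⟨v + (i.val : ℤ) - 1, by ring⟩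
  have hcardD : Nat.card ψ.range = 2 * m := by
    rw [dh_card_regular ψ.range hregD, hcard]
  have hnormD : ψ.range ≤ Subgroup.normalizer (Subgroup.zpowers σ : Set (Equiv.Perm C)) := by
    rintro τ ⟨g, rfl⟩
    rcases g with i | i
    · apply dh_norm_mem
      left
      have h1 : ψ (DihedralGroup.r i) = (σ ^ 2) ^ ((i.val : ℤ)) := rfl
      rw [h1, hcommσ]
      group
    · apply dh_norm_mem
      right
      have h1 : ψ (DihedralGroup.sr i) = dhF0 c * (σ ^ 2) ^ ((i.val : ℤ)) := rfl
      rw [h1, mul_inv_rev]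
      calc dhF0 c * (σ ^ 2) ^ ((i.val : ℤ)) * σ * (((σ ^ 2) ^ ((i.val : ℤ)))⁻¹ * (dhF0 c)⁻¹)
          = dhF0 c * ((σ ^ 2) ^ ((i.val : ℤ)) * σ * ((σ ^ 2) ^ ((i.val : ℤ)))⁻¹) * (dhF0 c)⁻¹ := by
            group
        _ = dhF0 c * σ * (dhF0 c)⁻¹ := by rw [hcommσ]; group
        _ = σ⁻¹ := hf0conj
  have hKcy : IsCyclic (Subgroup.zpowers (σ ^ 2)) := by
    refine ⟨⟨⟨σ ^ 2, Subgroup.mem_zpowers _⟩, ?_⟩⟩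
    rintro ⟨x, hx⟩
    rw [Subgroup.mem_zpowers_iff] at hx
    obtain ⟨k, hk⟩ := hx
    refine ⟨k, Subtype.ext ?_⟩
    rw [SubgroupClass.coe_zpow]
    exact hk
  have hKD : Subgroup.zpowers (σ ^ 2) ≤ ψ.range := by
    apply Subgroup.zpowers_le.mpr
    have := hmem1 1
    rwa [zpow_one] at this
  have hKcard : Nat.card (Subgroup.zpowers (σ ^ 2)) = m := by
    rw [Nat.card_zpowers, hρord]
  have hKrel : (Subgroup.zpowers (σ ^ 2)).relIndex ψ.range = 2 := by
    have h1 : Nat.card ((Subgroup.zpowers (σ ^ 2)).subgroupOf ψ.range) = m := by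
      rw [Nat.card_congr (Subgroup.subgroupOfEquivOfLe hKD).toEquiv, hKcard]
    have h2 := Subgroup.card_mul_index ((Subgroup.zpowers (σ ^ 2)).subgroupOf ψ.range)
    rw [h1, hcardD] at h2
    have h3 : m * ((Subgroup.zpowers (σ ^ 2)).subgroupOf ψ.range).index = m * 2 := by
      rw [h2]; ring
    have h4 := Nat.eq_of_mul_eq_mul_left (show 0 < m by omega) h3
    exact h4
  have hKcomm : ∀ ρ ∈ Subgroup.zpowers (σ ^ 2), ρ * σ = σ * ρ := by
    intro ρ hρ
    rw [Subgroup.mem_zpowers_iff] at hρ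
    obtain ⟨k, hk⟩ := hρ
    rw [← hk]
    exact hcommσ k
  have hgood : IsGoodDihedral m σ ψ.range :=
    ⟨hnormD, hregD, ⟨(MonoidHom.ofInjective hinj).symm⟩,
      Subgroup.zpowers (σ ^ 2), hKD, hKcy, hKcard, hKrel, hKcomm⟩
  refine ⟨ψ.range, hgood, ?_⟩
  -- uniqueness
  rintro D' hD'
  obtain ⟨hnorm', hreg', ⟨e'⟩, K', hKD', hKcyc', hKcard', hKrel', hKcomm'⟩ := hD'
  have hgood' : IsGoodDihedral m σ D' :=
    ⟨hnorm', hreg', ⟨e'⟩, K', hKD', hKcyc', hKcard', hKrel', hKcomm'⟩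
  have hKeq' : K' = Subgroup.zpowers (σ ^ 2) := dh_K_eq m hm c hcard hgen σ hσ K' hKcard' hKcomm'
  have hle : D' ≤ ψ.range := by
    intro τ hτD'
    by_cases hτK' : τ ∈ K'
    · rw [hKeq', Subgroup.mem_zpowers_iff] at hτK'
      obtain ⟨k, hk⟩ := hτK'
      rw [← hk]
      exact hmem1 k
    · have hconj := dh_conj m hm c hcard hgen σ hσ D' hgood' K'
        ⟨hKD', hKcyc', hKcard', hKrel', hKcomm'⟩ τ hτD' hτK'
      obtain ⟨a, hab⟩ := dh_exists_zpow c hgen (τ 1)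
      have hτs : ∀ s : ℤ, τ * σ ^ s = σ ^ (-s) * τ := by
        intro s
        have h2 := dh_conj_zpow τ σ s
        rw [hconj, inv_zpow, ← zpow_neg] at h2
        rw [← h2]
        group
      have hτap : ∀ v : ℤ, τ (c ^ v) = c ^ (a - v) := by
        intro v
        have h3 : (c : C) ^ v = (σ ^ v) 1 := by rw [dh_sigma_apply c σ hσ, mul_one]
        conv_lhs => rw [h3, ← Equiv.Perm.mul_apply, hτs v, Equiv.Perm.mul_apply,
          dh_sigma_apply c σ hσ]
        rw [hab, ← zpow_add]
        congr 1
        ring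
      -- a is odd
      have hodd : Odd a := by
        by_contra hev
        rw [Int.not_odd_iff_even] at hev
        obtain ⟨w, hw⟩ := hev
        obtain ⟨δ, hδD', hδ1⟩ := hreg'.1 1 c
        by_cases hδK' : δ ∈ K'
        · rw [hKeq', Subgroup.mem_zpowers_iff] at hδK'
          obtain ⟨k, hk⟩ := hδK'
          rw [← hk, happly1, mul_one] at hδ1
          have d1 := hdv _ _ (hδ1.trans (zpow_one c).symm)
          obtain ⟨u, hu⟩ := d1
          have hev : Even ((1 : ℤ) - 2 * k) := ⟨(m : ℤ) * u, by linarith⟩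
          exact (Int.not_odd_iff_even.mpr hev) ⟨-k, by ring⟩
        · have hco : τ⁻¹ * δ ∈ K' := dh_coset D' K' hKD' hKrel' τ δ hτD' hτK' hδD' hδK'
          rw [hKeq', Subgroup.mem_zpowers_iff] at hco
          obtain ⟨k, hk⟩ := hco
          have hδeq : δ = τ * (σ ^ 2) ^ k := by rw [hk]; group
          rw [hδeq, Equiv.Perm.mul_apply] at hδ1
          have h5 : ((σ ^ 2) ^ k) (1 : C) = c ^ (2 * k) := by rw [happly1, mul_one]
          rw [h5, hτap] at hδ1
          have d1 := hdv _ _ (hδ1.trans (zpow_one c).symm)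
          obtain ⟨u, hu⟩ := d1
          have hev : Even ((1 : ℤ) - (a - 2 * k)) := ⟨(m : ℤ) * u, by linarith⟩
          exact (Int.not_odd_iff_even.mpr hev) ⟨k - w, by rw [hw]; ring⟩
      obtain ⟨w, hw⟩ := hodd
      have hτeq : τ = dhF0 c * (σ ^ 2) ^ (-w : ℤ) := by
        ext x
        obtain ⟨v, rfl⟩ := dh_exists_zpow c hgen x
        rw [hτap, happly2]
        congr 1
        omega
      rw [hτeq]
      exact hmem2 (-w)
  apply Subgroup.eq_of_le_of_card_ge hle
  rw [hcardD, dh_card_regular D' hreg', hcard]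

end DH

end DHAux

/-- For `n = 2m` even, `Hol(C_n)` contains exactly one regular subgroup `D ≅ D_m`
whose index-2 cyclic subgroup of order `m` centralizes `σ`; moreover every element
of `D` outside that cyclic subgroup conjugates `σ` to `σ⁻¹`. -/
theorem unique_dihedral_in_hol_cyclic (m : ℕ) (hm : 3 ≤ m) {C : Type*} [Group C]
    [Fintype C] (c : C) (hcard : Fintype.card C = 2 * m)
    (hgen : Subgroup.zpowers c = ⊤) (σ : Equiv.Perm C)
    (hσ : σ = MulAction.toPermHom C C c) :
    (∃! D : Subgroup (Equiv.Perm C), IsGoodDihedral m σ D) ∧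
    ∀ D : Subgroup (Equiv.Perm C), IsGoodDihedral m σ D →
      ∀ K : Subgroup (Equiv.Perm C),
        (K ≤ D ∧ IsCyclic K ∧ Nat.card K = m ∧ K.relIndex D = 2 ∧
          ∀ ρ ∈ K, ρ * σ = σ * ρ) →
        ∀ f ∈ D, f ∉ K → f * σ * f⁻¹ = σ⁻¹ := by
  constructor
  · exact dh_exists_unique m hm c hcard hgen σ hσ
  · exact dh_conj m hm c hcard hgen σ hσ
end
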